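/- arXiv:2604.14404 — 3 statements merged into one kernel-verified Lean document; each statement's English description precedes it below -/
import Mathlib

section
/- Assume the training and aggregation samples are independent and that θ ↦ L_n(θ) is convex. Then, conditional on the training sample, under Assumption 1 there exists an absolute constant C9 > 0 such that for every sufficiently large n, P⋆^(n)( L_n(θ̃^ESA_n) ≤ C9 · { min_{k ∈ [k̃†_n(τ̃*)+1]} L_n(θ̃_{n,k}) + log(M_n n) } ) ≥ 1 − η̃_n − n^{−1}, where τ̃*, C8 are the constants of the sample-splitting not-too-early-stopping theorem and η̃_n := k̃†_n(τ̃*)·exp(−C8·L_n(θ̃_{n,k̃†_n(τ̃*)})). -/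
open MeasureTheory Filter Set ENNReal NNReal

noncomputable section

variable {Θ : Type*} [MeasurableSpace Θ]

open Classical in
/-- The Kullback–Leibler divergence `KL(μ, ν) = ∫ log (dμ/dν) dμ` when `μ ≪ ν` (and the
log-likelihood ratio is `μ`-integrable), and `∞` otherwise. -/
def KL (μ ν : Measure Θ) : ℝ≥0∞ :=
  if μ ≪ ν ∧ Integrable (llr μ ν) μ then ENNReal.ofReal (∫ θ, llr μ ν θ ∂μ) else ⊤

/-- The variational free energy `λ ∫ ℓ dQ + KL(Q, Π)` (valued in `ℝ≥0∞`). -/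
def VFE (lam : ℝ) (loss : Θ → ℝ) (prior Q : Measure Θ) : ℝ≥0∞ :=
  ENNReal.ofReal lam * ∫⁻ θ, ENNReal.ofReal (loss θ) ∂Q + KL Q prior

open Classical in
/-- `exp (-x)` for `x : ℝ≥0∞`, equal to `0` when `x = ∞`. -/
def expNeg (x : ℝ≥0∞) : ℝ := if x = ⊤ then 0 else Real.exp (-x.toReal)

/-- The excess risk of a model with prior `prior`: `- log ∫ exp (-ξ₁ L(θ)) dΠ(θ)`. -/
def modelRisk (ξ1 : ℝ) (L : Θ → ℝ) (prior : Measure Θ) : ℝ :=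
  - Real.log (∫ θ, Real.exp (-(ξ1 * L θ)) ∂prior)

/-- The early-stopping index `inf {k ∈ {2,…,M} : G (k-1) < G k} ∧ M`. -/
def stopIdx {α : Type*} [LT α] (M : ℕ) (G : ℕ → α) : ℕ :=
  sInf ({k | 2 ≤ k ∧ k ≤ M ∧ G (k - 1) < G k} ∪ {M})

/-- The near-optimal index `inf {k ∈ [M] : E k ≤ (1+τ) E (k+1)} ∧ M`. -/
def kdag (M : ℕ) (E : ℕ → ℝ) (τ : ℝ) : ℕ :=
  sInf ({k | 1 ≤ k ∧ k ≤ M ∧ E k ≤ (1 + τ) * E (k + 1)} ∪ {M})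

/-- The index `sup {k ∈ [M], k ≥ kd : E k ≤ (1+ν) Estar} ∨ kd`. -/
def kcirc (M kd : ℕ) (E : ℕ → ℝ) (Estar ν : ℝ) : ℕ :=
  sSup ({k | kd ≤ k ∧ k ≤ M ∧ E k ≤ (1 + ν) * Estar} ∪ {kd})

/-- The minimum `min {E k : k ∈ [m]}`. -/
def minIdx (m : ℕ) (E : ℕ → ℝ) : ℝ := sInf (E '' {k | 1 ≤ k ∧ k ≤ m})

/-- The generalized (Gibbs) posterior with density proportional to `exp (-λ ℓ(θ))`
with respect to `prior`. -/
def gibbs (lam : ℝ) (loss : Θ → ℝ) (prior : Measure Θ) : Measure Θ :=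
  (∫⁻ θ, ENNReal.ofReal (Real.exp (-(lam * loss θ))) ∂prior)⁻¹ •
    prior.withDensity fun θ => ENNReal.ofReal (Real.exp (-(lam * loss θ)))

open Classical in
/-- The `a`-Rényi divergence `(a-1)⁻¹ log ∫ (dμ/dν)^(a-1) dμ` when `μ ≪ ν`, `∞` otherwise. -/
def renyiDiv (a : ℝ) (μ ν : Measure Θ) : ℝ≥0∞ :=
  if μ ≪ ν then
    ENNReal.ofReal ((a - 1)⁻¹ * Real.log (∫ θ, ((μ.rnDeriv ν θ).toReal) ^ (a - 1) ∂μ))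
  else ⊤

/-- The `ε`-covering number of `S` with respect to `h`. -/
def coverNum {Θ : Type*} (h : Θ → Θ → ℝ) (ε : ℝ) (S : Set Θ) : ℝ≥0∞ :=
  ⨅ (T : Finset Θ) (_ : ∀ θ ∈ S, ∃ t ∈ T, h t θ ≤ ε), (T.card : ℝ≥0∞)

end

noncomputable section

set_option maxHeartbeats 2000000

private lemma xexp_le {y z : ℝ} (hy : 1 ≤ y) (hz : y ≤ z) :
    z * Real.exp (-z) ≤ y * Real.exp (-y) := by
  have h1 : 1 + (z - y) ≤ Real.exp (z - y) := by
    have := Real.add_one_le_exp (z - y); linarith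
  have h2 : z ≤ y * Real.exp (z - y) := by
    nlinarith [mul_nonneg (sub_nonneg.mpr hy) (sub_nonneg.mpr hz)]
  have h3 : Real.exp (z - y) * Real.exp (-z) = Real.exp (-y) := by
    rw [← Real.exp_add]; ring_nf
  calc z * Real.exp (-z) ≤ y * Real.exp (z - y) * Real.exp (-z) :=
        mul_le_mul_of_nonneg_right h2 (Real.exp_pos _).le
    _ = y * Real.exp (-y) := by rw [mul_assoc, h3]

private lemma key_exp {α x : ℝ} (hα : 0 < α) (hx : 0 ≤ x) {m : ℕ} (hm : 2 ≤ m) :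
    x * Real.exp (-(α * x)) ≤
      Real.log m / α * Real.exp (-(α * x)) + Real.log m / (α * ((m : ℝ) - 1)) := by
  have hm2 : (2:ℝ) ≤ (m:ℝ) := by exact_mod_cast hm
  have hm1 : (1:ℝ) ≤ (m:ℝ) - 1 := by linarith
  have hlog2 : Real.log 2 ≤ Real.log m := Real.log_le_log (by norm_num) hm2
  have hlog2pos : (0:ℝ) < Real.log 2 := Real.log_pos (by norm_num)
  have hlogm : 0 < Real.log m := lt_of_lt_of_le hlog2pos hlog2
  by_cases hcase : α * x ≤ Real.log m
  · have h1 : x ≤ Real.log m / α := (le_div_iff₀ hα).mpr (by linarith [mul_comm α x])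
    have h2 := mul_le_mul_of_nonneg_right h1 (Real.exp_pos (-(α * x))).le
    have hpos : 0 ≤ Real.log m / (α * ((m:ℝ) - 1)) := by positivity
    linarith
  · push_neg at hcase
    have hyz : (α * x) * Real.exp (-(α * x)) ≤ Real.log m / ((m:ℝ) - 1) := by
      rcases le_or_gt 1 (Real.log m) with hL1 | hL1
      · have hd := xexp_le hL1 hcase.le
        have hexp : Real.exp (-(Real.log m)) = ((m:ℝ))⁻¹ := by
          rw [Real.exp_neg, Real.exp_log (by positivity)]
        calc (α*x) * Real.exp (-(α*x)) ≤ Real.log m * Real.exp (-Real.log m) := hd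
          _ = Real.log m * ((m:ℝ))⁻¹ := by rw [hexp]
          _ ≤ Real.log m / ((m:ℝ)-1) := by
              rw [div_eq_mul_inv]
              exact mul_le_mul_of_nonneg_left
                (inv_anti₀ (by linarith) (by linarith)) hlogm.le
    -- m must be 2
      · have hm2' : m = 2 := by
          by_contra hne
          have h3 : 3 ≤ m := by omega
          have h3' : Real.log 3 ≤ Real.log m :=
            Real.log_le_log (by norm_num) (by exact_mod_cast h3)
          have he3 : Real.exp 1 ≤ 3 :=
            le_of_lt (lt_of_lt_of_le Real.exp_one_lt_d9 (by norm_num))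
          have h1log3 : (1:ℝ) ≤ Real.log 3 := by
            rw [Real.le_log_iff_exp_le (by norm_num)]; exact he3
          linarith
        subst hm2'
        have h1 : (α*x) * Real.exp (-(α*x)) ≤ Real.exp (-1) := by
          have h2 : (α*x) ≤ Real.exp ((α*x) - 1) := by
            have := Real.add_one_le_exp ((α*x) - 1); linarith
          have h3 : Real.exp ((α*x)-1) * Real.exp (-(α*x)) = Real.exp (-1) := by
            rw [← Real.exp_add]; ring_nf
          calc (α*x) * Real.exp (-(α*x)) ≤ Real.exp ((α*x)-1) * Real.exp (-(α*x)) :=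
                mul_le_mul_of_nonneg_right h2 (Real.exp_pos _).le
            _ = Real.exp (-1) := h3
        have h4 : Real.exp (-1) ≤ 1/2 := by
          rw [Real.exp_neg]
          have h2e : (2:ℝ) ≤ Real.exp 1 := by
            have := Real.add_one_le_exp (1:ℝ); linarith
          rw [inv_le_comm₀ (Real.exp_pos 1) (by norm_num)]
          calc (1/2 : ℝ)⁻¹ = 2 := by norm_num
            _ ≤ Real.exp 1 := h2e
        have h5 : (1:ℝ)/2 ≤ Real.log 2 := by
          have hh := Real.log_le_sub_one_of_pos (show (0:ℝ) < 1/2 by norm_num)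
          have : Real.log (1/2 : ℝ) = - Real.log 2 := by
            rw [one_div, Real.log_inv]
          linarith
        have : ((2:ℕ):ℝ) - 1 = 1 := by norm_num
        rw [this, div_one]
        calc (α*x) * Real.exp (-(α*x)) ≤ Real.exp (-1) := h1
          _ ≤ 1/2 := h4
          _ ≤ Real.log 2 := h5
          _ ≤ Real.log ((2:ℕ):ℝ) := by norm_num
    have hx' : x * Real.exp (-(α*x)) ≤ Real.log m / (α * ((m:ℝ)-1)) := by
      have heq : x * Real.exp (-(α*x)) = ((α*x) * Real.exp (-(α*x)))/α := by
        field_simp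
      rw [heq]
      rw [div_le_iff₀ hα]
      have : Real.log m / (α * ((m:ℝ)-1)) * α = Real.log m / ((m:ℝ)-1) := by
        field_simp
      rw [this]
      exact hyz
    have hfirst : 0 ≤ Real.log m / α * Real.exp (-(α*x)) := by positivity
    linarith


private lemma gibbs_sum_le (U T : Finset ℕ) (hTU : T ⊆ U) (hTne : T.Nonempty)
    (g : ℕ → ℝ) {α : ℝ} (hα : 0 < α) {m : ℕ} (hm : 2 ≤ m) (hcard : U.card ≤ m) :
    ∑ k ∈ T, Real.exp (-(α * g k)) / (∑ j ∈ U, Real.exp (-(α * g j))) * g k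
      ≤ (∑ k ∈ T, Real.exp (-(α * g k)) / (∑ j ∈ U, Real.exp (-(α * g j)))) * T.inf' hTne g
        + 3 * Real.log m / α := by
  have hUne : U.Nonempty := hTne.mono hTU
  set Z := ∑ j ∈ U, Real.exp (-(α * g j)) with hZdef
  have hZpos : 0 < Z := Finset.sum_pos (fun j _ => Real.exp_pos _) hUne
  set b := T.inf' hTne g with hbdef
  obtain ⟨k₁, hk₁T, hk₁b⟩ := T.exists_mem_eq_inf' hTne g
  have hbZ : Real.exp (-(α * b)) ≤ Z := by
    rw [hbdef, hk₁b]
    exact Finset.single_le_sum (fun j _ => (Real.exp_pos (-(α * g j))).le) (hTU hk₁T)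
  have hm2 : (2:ℝ) ≤ (m:ℝ) := by exact_mod_cast hm
  have hlogm : 0 < Real.log m :=
    lt_of_lt_of_le (Real.log_pos (by norm_num)) (Real.log_le_log (by norm_num) hm2)
  have hmain : ∑ k ∈ T, Real.exp (-(α * g k)) / Z * (g k - b) ≤ 3 * Real.log m / α := by
    have step1 : ∀ k ∈ T, Real.exp (-(α * g k)) / Z * (g k - b)
        ≤ Real.log m / α * (Real.exp (-(α * g k)) / Z)
          + (Real.exp (-(α*b))/Z) * (Real.log m / (α * ((m:ℝ)-1))) := by
      intro k hk
      have hxk : 0 ≤ g k - b := sub_nonneg.mpr (Finset.inf'_le g hk)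
      have hke : (g k - b) * Real.exp (-(α*(g k - b))) ≤ Real.log m / α * Real.exp (-(α*(g k - b))) + Real.log m / (α * ((m:ℝ)-1)) := key_exp hα hxk hm
      have hsplit : Real.exp (-(α * g k)) = Real.exp (-(α*b)) * Real.exp (-(α*(g k - b))) := by
        rw [← Real.exp_add]; ring_nf
      have hc : 0 ≤ Real.exp (-(α*b))/Z := by positivity
      calc Real.exp (-(α * g k))/Z * (g k - b)
          = (Real.exp (-(α*b))/Z) * ((g k - b) * Real.exp (-(α*(g k - b)))) := by
            rw [hsplit]; ring
        _ ≤ (Real.exp (-(α*b))/Z) *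
            (Real.log m / α * Real.exp (-(α*(g k - b))) + Real.log m/(α*((m:ℝ)-1))) :=
            mul_le_mul_of_nonneg_left hke hc
        _ = Real.log m / α * (Real.exp (-(α*g k))/Z)
            + (Real.exp (-(α*b))/Z) * (Real.log m/(α*((m:ℝ)-1))) := by
            rw [hsplit]; ring
    have hsumw : ∑ k ∈ T, Real.exp (-(α * g k)) / Z ≤ 1 := by
      rw [← Finset.sum_div]
      rw [div_le_one hZpos]
      exact Finset.sum_le_sum_of_subset_of_nonneg hTU
        (fun j _ _ => (Real.exp_pos (-(α * g j))).le)
    have hbZ1 : Real.exp (-(α*b))/Z ≤ 1 := (div_le_one hZpos).mpr hbZ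
    have hcardR : (T.card : ℝ) ≤ (m:ℝ) := by
      exact_mod_cast le_trans (Finset.card_le_card hTU) hcard
    calc ∑ k ∈ T, Real.exp (-(α * g k)) / Z * (g k - b)
        ≤ ∑ k ∈ T, (Real.log m / α * (Real.exp (-(α * g k)) / Z)
            + (Real.exp (-(α*b))/Z) * (Real.log m / (α * ((m:ℝ)-1)))) :=
          Finset.sum_le_sum step1
      _ = Real.log m / α * (∑ k ∈ T, Real.exp (-(α*g k))/Z)
            + (T.card : ℝ) * ((Real.exp (-(α*b))/Z) * (Real.log m/(α*((m:ℝ)-1)))) := by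
          rw [Finset.sum_add_distrib, ← Finset.mul_sum, Finset.sum_const, nsmul_eq_mul]
      _ ≤ Real.log m / α * 1 + (m:ℝ) * (1 * (Real.log m/(α*((m:ℝ)-1)))) := by
          have t1 : Real.log m / α * (∑ k ∈ T, Real.exp (-(α*g k))/Z)
              ≤ Real.log m / α * 1 :=
            mul_le_mul_of_nonneg_left hsumw (by positivity)
          have t2 : (T.card : ℝ) * ((Real.exp (-(α*b))/Z) * (Real.log m/(α*((m:ℝ)-1))))
              ≤ (m:ℝ) * (1 * (Real.log m/(α*((m:ℝ)-1)))) := by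
            have hQ : 0 ≤ Real.log m/(α*((m:ℝ)-1)) :=
              div_nonneg hlogm.le (by nlinarith)
            apply mul_le_mul hcardR
            · exact mul_le_mul_of_nonneg_right hbZ1 hQ
            · exact mul_nonneg (by positivity) hQ
            · positivity
          linarith
      _ ≤ 3 * Real.log m / α := by
          rw [mul_one, one_mul]
          have h1 : (m:ℝ) * (Real.log m/(α*((m:ℝ)-1))) ≤ 2 * (Real.log m / α) := by
            have e1 : (m:ℝ) * (Real.log m/(α*((m:ℝ)-1))) = ((m:ℝ) * Real.log m)/(α*((m:ℝ)-1)) := by ring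
            have e2 : 2 * (Real.log (m:ℝ)/α) = (2*Real.log (m:ℝ))/α := by ring
            rw [e1, e2, div_le_div_iff₀ (by nlinarith) hα]
            nlinarith [mul_nonneg (mul_nonneg hlogm.le hα.le)
              (show (0:ℝ) ≤ (m:ℝ) - 2 by linarith)]
          have h3 : Real.log m/α + 2*(Real.log m/α) = 3 * Real.log m / α := by ring
          linarith
  have hexpand : ∑ k ∈ T, Real.exp (-(α * g k)) / Z * (g k - b)
      = ∑ k ∈ T, Real.exp (-(α * g k)) / Z * g k
        - (∑ k ∈ T, Real.exp (-(α * g k)) / Z) * b := by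
    rw [Finset.sum_mul, ← Finset.sum_sub_distrib]
    congr 1; ext k; ring
  rw [hexpand] at hmain
  linarith

private lemma markov_outer {Ω : Type*} [MeasurableSpace Ω] (μ : Measure Ω) (f : Ω → ℝ)
    (hf : AEMeasurable f μ) (c B : ℝ) (hB : 0 ≤ B)
    (h : ∫⁻ ω, ENNReal.ofReal (Real.exp (f ω)) ∂μ ≤ ENNReal.ofReal B) :
    μ {ω | c ≤ f ω} ≤ ENNReal.ofReal (B * Real.exp (-c)) := by
  have hfm : AEMeasurable (fun ω => ENNReal.ofReal (Real.exp (f ω))) μ :=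
    (ENNReal.measurable_ofReal.comp Real.measurable_exp).comp_aemeasurable hf
  have h2 := mul_meas_ge_le_lintegral₀ hfm (ENNReal.ofReal (Real.exp c))
  have hsub : {ω | c ≤ f ω} ⊆ {ω | ENNReal.ofReal (Real.exp c) ≤ ENNReal.ofReal (Real.exp (f ω))} :=
    fun ω hω => ENNReal.ofReal_le_ofReal (Real.exp_le_exp.mpr hω)
  have h3 : ENNReal.ofReal (Real.exp c) * μ {ω | c ≤ f ω} ≤ ENNReal.ofReal B :=
    le_trans (mul_le_mul_right (measure_mono hsub) _) (le_trans h2 h)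
  have hne0 : ENNReal.ofReal (Real.exp c) ≠ 0 := by
    simp [ENNReal.ofReal_eq_zero, not_le, Real.exp_pos]
  have hnetop : ENNReal.ofReal (Real.exp c) ≠ ⊤ := ENNReal.ofReal_ne_top
  have h4 : μ {ω | c ≤ f ω} ≤ ENNReal.ofReal B / ENNReal.ofReal (Real.exp c) := by
    rw [ENNReal.le_div_iff_mul_le (Or.inl hne0) (Or.inl hnetop)]
    rw [mul_comm]
    exact h3
  calc μ {ω | c ≤ f ω} ≤ ENNReal.ofReal B / ENNReal.ofReal (Real.exp c) := h4
    _ = ENNReal.ofReal (B / Real.exp c) := (ENNReal.ofReal_div_of_pos (Real.exp_pos c)).symm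
    _ = ENNReal.ofReal (B * Real.exp (-c)) := by
        rw [Real.exp_neg, div_eq_mul_inv]

set_option maxHeartbeats 2000000 in
private lemma main_core
    {Ω : Type*} [MeasurableSpace Ω] (P : Measure Ω) [IsProbabilityMeasure P]
    {Θ : Type*} [AddCommGroup Θ] [Module ℝ Θ]
    (θ : ℕ → Θ) (E : ℕ → ℝ) (G : ℕ → Ω → ℝ) (ls : Ω → ℝ)
    (Lf : Θ → ℝ) (hconv : ConvexOn ℝ Set.univ Lf) (hLE : ∀ k, Lf (θ k) = E k)
    (hEdef : ∀ k, E k = ∫ ω, (G k ω - ls ω) ∂P)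
    (M : ℕ) (hM2 : 2 ≤ M) (n : ℕ) (hn : 2 ≤ n)
    (lam ξ1 ξ2 ξ3 α : ℝ) (hlam : 0 < lam) (hξ1 : 0 < ξ1) (hξ2 : 0 < ξ2)
    (hξ3 : 0 < ξ3) (hα : 0 < α)
    (hA1 : ∀ k ∈ Finset.Icc 1 M,
      (∫⁻ ω, ENNReal.ofReal (Real.exp (-(lam * (G k ω - ls ω)))) ∂P)
          ≤ ENNReal.ofReal (Real.exp (-(ξ1 * E k))) ∧
      (∫⁻ ω, ENNReal.ofReal (Real.exp (lam * ξ2 * (G k ω - ls ω))) ∂P)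
          ≤ ENNReal.ofReal (Real.exp (ξ3 * E k)))
    (K : ℕ) (hK1 : 1 ≤ K) (hKM : K + 1 ≤ M)
    (mstar : ℝ) (hmstar_pos : 0 < mstar)
    (k₀ : ℕ) (hk₀1 : 1 ≤ k₀) (hk₀K : k₀ ≤ K + 1) (hk₀E : E k₀ = mstar)
    (hk₀int : Integrable (fun ω => G k₀ ω - ls ω) P)
    (mt : Ω → ℕ) (hmtM : ∀ ω, mt ω ≤ M)
    (C9 : ℝ) (hC9 : ξ3/(ξ1*ξ2) + 2/(ξ1*ξ2) + 3*lam/(ξ1*α) + 3/ξ1 ≤ C9) :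
    P {ω | K + 1 ≤ mt ω} ≤
      P {ω | Lf (∑ k ∈ Finset.Icc 1 (mt ω),
            (Real.exp (-(α * G k ω)) / ∑ j ∈ Finset.Icc 1 (mt ω), Real.exp (-(α * G j ω))) • θ k)
            ≤ C9 * (mstar + Real.log ((M:ℝ) * n))} + ENNReal.ofReal ((n:ℝ)⁻¹) := by
  classical
  have hMR : (2:ℝ) ≤ (M:ℝ) := by exact_mod_cast hM2
  have hnR : (2:ℝ) ≤ (n:ℝ) := by exact_mod_cast hn
  have hMpos : (0:ℝ) < M := by linarith
  have hnpos : (0:ℝ) < n := by linarith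
  set t := Real.log (2 * (M:ℝ) * n) with ht
  set s := Real.log (2 * (n:ℝ)) with hs
  have htpos : 0 < t := Real.log_pos (by nlinarith)
  have hspos : 0 < s := Real.log_pos (by nlinarith)
  set bound2 := (ξ3 * mstar + s) / (lam * ξ2) with hbound2
  have hbound2pos : 0 < bound2 := div_pos (by nlinarith) (by positivity)
  -- logarithm comparisons
  have hlogM : 0 < Real.log M :=
    lt_of_lt_of_le (Real.log_pos (by norm_num)) (Real.log_le_log (by norm_num) hMR)
  have hlogn : 0 < Real.log n :=
    lt_of_lt_of_le (Real.log_pos (by norm_num)) (Real.log_le_log (by norm_num) hnR)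
  have hΛ : Real.log ((M:ℝ) * n) = Real.log M + Real.log n :=
    Real.log_mul (by positivity) (by positivity)
  have hΛpos : 0 < Real.log ((M:ℝ) * n) := by rw [hΛ]; linarith
  have hlog2M : Real.log 2 ≤ Real.log M := Real.log_le_log (by norm_num) hMR
  have hsΛ : s ≤ Real.log ((M:ℝ) * n) := by
    rw [hs, Real.log_mul (by norm_num) (by positivity), hΛ]; linarith
  have hlogMΛ : Real.log M ≤ Real.log ((M:ℝ) * n) := by rw [hΛ]; linarith
  have htΛ : t ≤ 3 * Real.log ((M:ℝ) * n) := by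
    rw [ht, Real.log_mul (by positivity) (by positivity),
      Real.log_mul (by norm_num) (by positivity), hΛ]
    linarith
  -- the bad sets
  set A : ℕ → Set Ω := fun k =>
    {ω | Integrable (fun ω' => G k ω' - ls ω') P ∧ G k ω - ls ω ≤ (ξ1 * E k - t)/lam} with hA
  set B2 : Set Ω := {ω | bound2 < G k₀ ω - ls ω} with hB2
  set Bad : Set Ω := (⋃ k ∈ Finset.Icc 1 M, A k) ∪ B2 with hBadDef
  -- measure of the bad sets
  have hAk : ∀ k ∈ Finset.Icc 1 M, P (A k) ≤ ENNReal.ofReal ((2*(M:ℝ)*n)⁻¹) := by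
    intro k hk
    by_cases hint : Integrable (fun ω' => G k ω' - ls ω') P
    · have hmk := markov_outer P (fun ω => -(lam * (G k ω - ls ω)))
        ((hint.aemeasurable.const_mul lam).neg) (t - ξ1 * E k) (Real.exp (-(ξ1 * E k)))
        (Real.exp_pos _).le (hA1 k hk).1
      refine le_trans (le_trans (measure_mono ?_) hmk) (le_of_eq ?_)
      · intro ω hω
        have h1 : G k ω - ls ω ≤ (ξ1 * E k - t)/lam := hω.2
        have h2 : (G k ω - ls ω) * lam ≤ ξ1 * E k - t := (le_div_iff₀ hlam).mp h1
        show t - ξ1 * E k ≤ -(lam * (G k ω - ls ω))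
        nlinarith
      · congr 1
        rw [← Real.exp_add]
        have he : -(ξ1 * E k) + -(t - ξ1 * E k) = -t := by ring
        rw [he, Real.exp_neg, Real.exp_log (by positivity)]
    · have hempty : A k = ∅ := Set.eq_empty_iff_forall_notMem.mpr (fun ω hω => hint hω.1)
      rw [hempty]
      simp
  have hB2m : P B2 ≤ ENNReal.ofReal ((2*(n:ℝ))⁻¹) := by
    have hk₀M : k₀ ∈ Finset.Icc 1 M := Finset.mem_Icc.mpr ⟨hk₀1, by omega⟩
    have hmk := markov_outer P (fun ω => lam * ξ2 * (G k₀ ω - ls ω))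
      (hk₀int.aemeasurable.const_mul (lam * ξ2)) (ξ3 * mstar + s) (Real.exp (ξ3 * E k₀))
      (Real.exp_pos _).le (hA1 k₀ hk₀M).2
    refine le_trans (le_trans (measure_mono ?_) hmk) (le_of_eq ?_)
    · intro ω hω
      have h1 : bound2 < G k₀ ω - ls ω := hω
      have h2 : lam * ξ2 * bound2 = ξ3 * mstar + s := by
        rw [hbound2]; field_simp
      show ξ3 * mstar + s ≤ lam * ξ2 * (G k₀ ω - ls ω)
      rw [← h2]
      have := mul_lt_mul_of_pos_left h1 (show (0:ℝ) < lam * ξ2 by positivity)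
      linarith
    · congr 1
      rw [hk₀E, ← Real.exp_add]
      have he : ξ3 * mstar + -(ξ3 * mstar + s) = -s := by ring
      rw [he, Real.exp_neg, Real.exp_log (by positivity)]
  have hBad : P Bad ≤ ENNReal.ofReal ((n:ℝ)⁻¹) := by
    refine le_trans (measure_union_le _ _) ?_
    have h1 : P (⋃ k ∈ Finset.Icc 1 M, A k) ≤ ENNReal.ofReal ((2*(n:ℝ))⁻¹) := by
      refine le_trans (measure_biUnion_finset_le _ _) ?_
      refine le_trans (Finset.sum_le_sum hAk) ?_
      rw [Finset.sum_const, Nat.card_Icc]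
      simp only [nsmul_eq_mul]
      have hcard : (M + 1 - 1) = M := by omega
      rw [hcard, ← ENNReal.ofReal_natCast M, ← ENNReal.ofReal_mul (by positivity)]
      apply ENNReal.ofReal_le_ofReal
      apply le_of_eq
      have hM0 : (M:ℝ) ≠ 0 := by positivity
      have hn0 : (n:ℝ) ≠ 0 := by positivity
      field_simp
    refine le_trans (add_le_add h1 hB2m) (le_of_eq ?_)
    rw [← ENNReal.ofReal_add (by positivity) (by positivity)]
    congr 1
    rw [← two_mul, mul_inv, ← mul_assoc, mul_inv_cancel₀ two_ne_zero, one_mul]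
  -- the pointwise inclusion
  have hpoint : ∀ ω, K + 1 ≤ mt ω → ω ∉ Bad →
      Lf (∑ k ∈ Finset.Icc 1 (mt ω),
        (Real.exp (-(α * G k ω)) / ∑ j ∈ Finset.Icc 1 (mt ω), Real.exp (-(α * G j ω))) • θ k)
        ≤ C9 * (mstar + Real.log ((M:ℝ) * n)) := by
    intro ω hmω hωB
    set m := mt ω with hm
    set U : Finset ℕ := Finset.Icc 1 m with hU
    set Z := ∑ j ∈ U, Real.exp (-(α * G j ω)) with hZdef
    have hUne : U.Nonempty := ⟨1, Finset.mem_Icc.mpr ⟨le_refl 1, by omega⟩⟩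
    have hZpos : 0 < Z := Finset.sum_pos (fun j _ => Real.exp_pos _) hUne
    have hwnn : ∀ k, 0 ≤ Real.exp (-(α * G k ω)) / Z := fun k => by positivity
    have hwsum : ∑ k ∈ U, Real.exp (-(α * G k ω)) / Z = 1 := by
      rw [← Finset.sum_div, div_self hZpos.ne']
    have hjensen := hconv.map_sum_le (t := U) (w := fun k => Real.exp (-(α * G k ω))/Z)
        (p := fun k => θ k) (fun i _ => hwnn i) hwsum (fun i _ => Set.mem_univ _)
    set T : Finset ℕ := U.filter (fun k => Integrable (fun ω' => G k ω' - ls ω') P) with hT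
    have hk₀U : k₀ ∈ U := Finset.mem_Icc.mpr ⟨hk₀1, by omega⟩
    have hk₀T : k₀ ∈ T := Finset.mem_filter.mpr ⟨hk₀U, hk₀int⟩
    have hTne : T.Nonempty := ⟨k₀, hk₀T⟩
    have hmM : m ≤ M := hmtM ω
    have hsum1 : ∑ k ∈ U, (Real.exp (-(α * G k ω))/Z) • Lf (θ k)
        = ∑ k ∈ T, Real.exp (-(α * G k ω))/Z * E k := by
      rw [← Finset.sum_filter_add_sum_filter_not U
        (fun k => Integrable (fun ω' => G k ω' - ls ω') P)]
      have hzero : ∑ k ∈ U.filter (fun k => ¬ Integrable (fun ω' => G k ω' - ls ω') P),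
          (Real.exp (-(α * G k ω))/Z) • Lf (θ k) = 0 := by
        apply Finset.sum_eq_zero
        intro k hk
        have hnint := (Finset.mem_filter.mp hk).2
        have hE0 : E k = 0 := by rw [hEdef k]; exact integral_undef hnint
        rw [smul_eq_mul, hLE, hE0, mul_zero]
      rw [hzero, add_zero]
      apply Finset.sum_congr rfl
      intro k _
      rw [smul_eq_mul, hLE]
    have hnotBad1 : ∀ k ∈ T, (ξ1 * E k - t)/lam < G k ω - ls ω := by
      intro k hk
      obtain ⟨hkU, hkint⟩ := Finset.mem_filter.mp hk
      have hkM : k ∈ Finset.Icc 1 M := by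
        rw [Finset.mem_Icc] at hkU ⊢
        omega
      by_contra hcon
      push_neg at hcon
      exact hωB (Or.inl (Set.mem_biUnion hkM ⟨hkint, hcon⟩))
    have hnotBad2 : G k₀ ω - ls ω ≤ bound2 := by
      by_contra hcon
      push_neg at hcon
      exact hωB (Or.inr hcon)
    have hstep : ∑ k ∈ T, Real.exp (-(α * G k ω))/Z * E k
        ≤ ∑ k ∈ T, Real.exp (-(α * G k ω))/Z * ((lam * (G k ω - ls ω) + t)/ξ1) := by
      apply Finset.sum_le_sum
      intro k hk
      apply mul_le_mul_of_nonneg_left _ (hwnn k)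
      have h1 := hnotBad1 k hk
      rw [div_lt_iff₀ hlam] at h1
      rw [le_div_iff₀ hξ1]
      nlinarith
    set W := ∑ k ∈ T, Real.exp (-(α * G k ω))/Z with hW
    have hW0 : 0 ≤ W := Finset.sum_nonneg (fun k _ => hwnn k)
    have hW1 : W ≤ 1 := by
      rw [hW, ← hwsum]
      exact Finset.sum_le_sum_of_subset_of_nonneg (Finset.filter_subset _ _)
        (fun j _ _ => hwnn j)
    have hgibbs := gibbs_sum_le U T (Finset.filter_subset _ _) hTne (fun k => G k ω) hα hM2
      (by rw [hU, Nat.card_Icc]; omega)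
    have hb_le : T.inf' hTne (fun k => G k ω) ≤ G k₀ ω := Finset.inf'_le _ hk₀T
    have hkey : ∑ k ∈ T, Real.exp (-(α * G k ω))/Z * G k ω
        ≤ W * G k₀ ω + 3 * Real.log M / α := by
      refine le_trans hgibbs ?_
      have := mul_le_mul_of_nonneg_left hb_le hW0
      linarith
    have hSexp : ∑ k ∈ T, Real.exp (-(α * G k ω))/Z * ((lam * (G k ω - ls ω) + t)/ξ1)
        = (lam * (∑ k ∈ T, Real.exp (-(α * G k ω))/Z * G k ω)
            + (t - lam * ls ω) * W)/ξ1 := by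
      rw [hW, Finset.mul_sum, Finset.mul_sum, ← Finset.sum_add_distrib, Finset.sum_div]
      apply Finset.sum_congr rfl
      intro k _
      ring
    have hmid : ∑ k ∈ T, Real.exp (-(α * G k ω))/Z * ((lam * (G k ω - ls ω) + t)/ξ1)
        ≤ (lam * bound2 + t + lam * (3 * Real.log M / α))/ξ1 := by
      rw [hSexp]
      gcongr (?_ : ℝ)/ξ1
      have e1 : lam * (∑ k ∈ T, Real.exp (-(α * G k ω))/Z * G k ω)
          ≤ lam * (W * G k₀ ω + 3 * Real.log M / α) :=
        mul_le_mul_of_nonneg_left hkey hlam.le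
      have a1 : (lam*W)*(G k₀ ω - ls ω) ≤ (lam*W)*bound2 :=
        mul_le_mul_of_nonneg_left hnotBad2 (by positivity)
      have a2 : W*(lam*bound2) ≤ 1*(lam*bound2) :=
        mul_le_mul_of_nonneg_right hW1 (by positivity)
      have a3 : W*t ≤ 1*t := mul_le_mul_of_nonneg_right hW1 htpos.le
      linarith [e1, a1, a2, a3]
    have hfin2 : (lam * bound2 + t + lam * (3 * Real.log M / α))/ξ1
        ≤ C9 * (mstar + Real.log ((M:ℝ) * n)) := by
      have heq : (lam * bound2 + t + lam * (3 * Real.log M / α))/ξ1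
          = ξ3/(ξ1*ξ2)*mstar + 1/(ξ1*ξ2)*s + 3*lam/(ξ1*α)*Real.log M + 1/ξ1*t := by
        rw [hbound2]; field_simp; ring
      rw [heq]
      have hq1 : (0:ℝ) < 2/(ξ1*ξ2) := by positivity
      have hq2 : (0:ℝ) < 3*lam/(ξ1*α) := by positivity
      have hq3 : (0:ℝ) < 3/ξ1 := by positivity
      have hq4 : (0:ℝ) < ξ3/(ξ1*ξ2) := by positivity
      have hc1 : ξ3/(ξ1*ξ2) ≤ C9 := by linarith
      have h12 : 1/(ξ1*ξ2) ≤ 2/(ξ1*ξ2) := by gcongr <;> norm_num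
      have h33 : 3*(1/ξ1) = 3/ξ1 := by ring
      have hcΛ : 1/(ξ1*ξ2) + 3*lam/(ξ1*α) + 3*(1/ξ1) ≤ C9 := by linarith
      have p1 : ξ3/(ξ1*ξ2)*mstar ≤ C9*mstar :=
        mul_le_mul_of_nonneg_right hc1 hmstar_pos.le
      have p2 : 1/(ξ1*ξ2)*s ≤ 1/(ξ1*ξ2)*Real.log ((M:ℝ)*n) :=
        mul_le_mul_of_nonneg_left hsΛ (by positivity)
      have p3 : 3*lam/(ξ1*α)*Real.log M ≤ 3*lam/(ξ1*α)*Real.log ((M:ℝ)*n) :=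
        mul_le_mul_of_nonneg_left hlogMΛ (by positivity)
      have p4 : 1/ξ1*t ≤ 1/ξ1*(3*Real.log ((M:ℝ)*n)) :=
        mul_le_mul_of_nonneg_left htΛ (by positivity)
      have p5 : (1/(ξ1*ξ2) + 3*lam/(ξ1*α) + 3*(1/ξ1))*Real.log ((M:ℝ)*n)
          ≤ C9*Real.log ((M:ℝ)*n) :=
        mul_le_mul_of_nonneg_right hcΛ hΛpos.le
      linarith [p1, p2, p3, p4, p5]
    calc Lf (∑ k ∈ U, (Real.exp (-(α * G k ω)) / Z) • θ k)
        ≤ ∑ k ∈ U, (Real.exp (-(α * G k ω))/Z) • Lf (θ k) := by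
          simpa using hjensen
      _ = ∑ k ∈ T, Real.exp (-(α * G k ω))/Z * E k := hsum1
      _ ≤ ∑ k ∈ T, Real.exp (-(α * G k ω))/Z * ((lam * (G k ω - ls ω) + t)/ξ1) := hstep
      _ ≤ (lam * bound2 + t + lam * (3 * Real.log M / α))/ξ1 := hmid
      _ ≤ C9 * (mstar + Real.log ((M:ℝ) * n)) := hfin2
  -- assemble
  have hsubset : {ω | K + 1 ≤ mt ω} ⊆
      {ω | Lf (∑ k ∈ Finset.Icc 1 (mt ω),
        (Real.exp (-(α * G k ω)) / ∑ j ∈ Finset.Icc 1 (mt ω), Real.exp (-(α * G j ω))) • θ k)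
        ≤ C9 * (mstar + Real.log ((M:ℝ) * n))} ∪ Bad := by
    intro ω hω
    by_cases hb : ω ∈ Bad
    · exact Or.inr hb
    · exact Or.inl (hpoint ω hω hb)
  calc P {ω | K + 1 ≤ mt ω}
      ≤ P ({ω | Lf (∑ k ∈ Finset.Icc 1 (mt ω),
          (Real.exp (-(α * G k ω)) / ∑ j ∈ Finset.Icc 1 (mt ω), Real.exp (-(α * G j ω))) • θ k)
          ≤ C9 * (mstar + Real.log ((M:ℝ) * n))} ∪ Bad) := measure_mono hsubset
    _ ≤ P {ω | Lf (∑ k ∈ Finset.Icc 1 (mt ω),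
          (Real.exp (-(α * G k ω)) / ∑ j ∈ Finset.Icc 1 (mt ω), Real.exp (-(α * G j ω))) • θ k)
          ≤ C9 * (mstar + Real.log ((M:ℝ) * n))} + P Bad := measure_union_le _ _
    _ ≤ _ := add_le_add le_rfl hBad


/-- **Oracle inequality for the SS-ESA estimator** (Theorem 10).  Conditionally on the
training sample, if `Lₙ` is convex then under Assumption 1 there is an absolute constant
`C9 > 0` with
`P⋆ⁿ( Lₙ(θ̃ᴱˢᴬₙ) ≤ C9 (min_{k ∈ [k̃†ₙ(τ̃*)+1]} Lₙ(θ̃ₙₖ) + log(Mₙ n)) ) ≥ 1 - η̃ₙ - n⁻¹`. -/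
theorem oracle_ss_esa
    {Ω : ℕ → Type*} [∀ n, MeasurableSpace (Ω n)]
    (P : (n : ℕ) → Measure (Ω n)) (hP : ∀ n, IsProbabilityMeasure (P n))
    {Θ : Type*} [MeasurableSpace Θ] [AddCommGroup Θ] [Module ℝ Θ]
    (M : ℕ → ℕ) (hM : ∀ n, 1 ≤ M n)
    (Θset : ℕ → ℕ → Set Θ) (hnest : ∀ n k, Θset n k ⊆ Θset n (k + 1))
    (ℓ : (n : ℕ) → Θ → Ω n → ℝ) (hℓ : ∀ n θ ω, 0 ≤ ℓ n θ ω)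
    (ℓstar : (n : ℕ) → Ω n → ℝ)
    (lam ξ1 ξ2 ξ3 : ℝ)
    (hlam : 0 < lam) (hξ1 : 0 < ξ1) (hξ2 : 0 < ξ2) (hξ3 : 0 < ξ3)
    (L : ℕ → Θ → ℝ) (hL : ∀ n θ, L n θ = ∫ ω, (ℓ n θ ω - ℓstar n ω) ∂(P n))
    -- the candidate estimators built from the independent training sample: conditionally
    -- on that sample they are fixed elements of the models
    (θtil : ℕ → ℕ → Θ) (hθtil : ∀ n, ∀ k ∈ Finset.Icc 1 (M n), θtil n k ∈ Θset n k)
    -- Assumption 1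
    (hA1 : ∀ᶠ (n : ℕ) in atTop, ∀ k ∈ Finset.Icc 1 (M n), ∀ θ ∈ Θset n k,
      (∫⁻ ω, ENNReal.ofReal (Real.exp (-(lam * (ℓ n θ ω - ℓstar n ω)))) ∂(P n))
          ≤ ENNReal.ofReal (Real.exp (-(ξ1 * L n θ))) ∧
      (∫⁻ ω, ENNReal.ofReal (Real.exp (lam * ξ2 * (ℓ n θ ω - ℓstar n ω))) ∂(P n))
          ≤ ENNReal.ofReal (Real.exp (ξ3 * L n θ)))
    -- the validation-loss stopping index and the near-optimal index
    (mtil : (n : ℕ) → Ω n → ℕ)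
    (hmtil : ∀ n ω, mtil n ω = stopIdx (M n) (fun k => ℓ n (θtil n k) ω))
    (ktil : ℕ → ℝ → ℕ)
    (hktil : ∀ n τ, ktil n τ = kdag (M n) (fun k => L n (θtil n k)) τ)
    (α : ℝ) (hα : 0 < α)
    (hconv : ∀ n, ConvexOn ℝ Set.univ (L n))
    -- the constants of the sample-splitting not-too-early-stopping theorem
    (τstar C8 : ℝ) (hτstar : 0 < τstar) (hC8 : 0 < C8)
    (η : ℕ → ℝ)
    (hηdef : ∀ n, η n = ktil n τstar * Real.exp (-(C8 * L n (θtil n (ktil n τstar)))))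
    (hNTE : ∀ᶠ (n : ℕ) in atTop,
      1 - η n ≤ (P n {ω | ktil n τstar + 1 ≤ mtil n ω}).toReal) :
    ∃ C9 > (0 : ℝ), ∀ᶠ (n : ℕ) in atTop,
      1 - η n - (n : ℝ)⁻¹
        ≤ (P n {ω |
            L n (∑ k ∈ Finset.Icc 1 (mtil n ω),
              (Real.exp (-(α * ℓ n (θtil n k) ω))
                / ∑ j ∈ Finset.Icc 1 (mtil n ω), Real.exp (-(α * ℓ n (θtil n j) ω)))
                • θtil n k)
              ≤ C9 * (minIdx (ktil n τstar + 1) (fun k => L n (θtil n k))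
                  + Real.log ((M n : ℝ) * n))}).toReal := by
  classical
  refine ⟨ξ3/(ξ1*ξ2) + 2/(ξ1*ξ2) + 3*lam/(ξ1*α) + 3/ξ1, by positivity, ?_⟩
  filter_upwards [hA1, hNTE, eventually_ge_atTop 2] with n hA1n hNTEn hn2
  by_cases htriv : 1 - η n - (n:ℝ)⁻¹ ≤ 0
  · exact le_trans htriv ENNReal.toReal_nonneg
  push_neg at htriv
  haveI := hP n
  have hninv : (0:ℝ) ≤ (n:ℝ)⁻¹ := by positivity
  have hη1 : η n < 1 := by linarith
  -- the kdag membership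
  have hkdag : ktil n τstar = sInf ({k | 1 ≤ k ∧ k ≤ M n ∧
      L n (θtil n k) ≤ (1 + τstar) * L n (θtil n (k+1))} ∪ {M n}) := by
    rw [hktil n τstar]; rfl
  have hKmem : ktil n τstar ∈ ({k | 1 ≤ k ∧ k ≤ M n ∧
      L n (θtil n k) ≤ (1 + τstar) * L n (θtil n (k+1))} ∪ {M n}) := by
    rw [hkdag]
    exact Nat.sInf_mem ⟨M n, Set.mem_union_right _ rfl⟩
  have hK1 : 1 ≤ ktil n τstar := by
    rcases hKmem with h | h
    · exact h.1
    · rw [Set.mem_singleton_iff] at h; rw [h]; exact hM n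
  -- positivity of the risk at the kdag index
  have hEK : 0 < L n (θtil n (ktil n τstar)) := by
    by_contra hc
    push_neg at hc
    have h1 : (1:ℝ) ≤ Real.exp (-(C8 * L n (θtil n (ktil n τstar)))) :=
      Real.one_le_exp_iff.mpr (by nlinarith)
    have hK1R : (1:ℝ) ≤ (ktil n τstar : ℝ) := by exact_mod_cast hK1
    have h2 := hηdef n
    nlinarith [h2]
  -- the stopping event is nonempty, hence ktil + 1 ≤ M n
  have hmtle : ∀ ω, mtil n ω ≤ M n := fun ω => by
    rw [hmtil n ω]
    exact Nat.sInf_le (Set.mem_union_right _ rfl)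
  have hKM : ktil n τstar + 1 ≤ M n := by
    by_contra hc
    push_neg at hc
    have hempty : {ω | ktil n τstar + 1 ≤ mtil n ω} = ∅ :=
      Set.eq_empty_iff_forall_notMem.mpr (fun ω hω => by
        have h1 : ktil n τstar + 1 ≤ mtil n ω := hω
        have h2 := hmtle ω
        omega)
    rw [hempty] at hNTEn
    simp only [measure_empty, ENNReal.toReal_zero] at hNTEn
    linarith
  have hM2 : 2 ≤ M n := by omega
  -- positivity along the chain
  have hchain : ∀ d k, k + d = ktil n τstar → 1 ≤ k → 0 < L n (θtil n k) := by
    intro d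
    induction d with
    | zero =>
        intro k hk _
        have hkk : k = ktil n τstar := by omega
        rw [hkk]; exact hEK
    | succ d ih =>
        intro k hkd hk1
        have hlt : k < ktil n τstar := by omega
        have hnot : k ∉ ({k | 1 ≤ k ∧ k ≤ M n ∧
            L n (θtil n k) ≤ (1 + τstar) * L n (θtil n (k+1))} ∪ {M n}) := by
          apply Nat.notMem_of_lt_sInf
          rw [← hkdag]
          exact hlt
        have hrec := ih (k+1) (by omega) (by omega)
        have hgt : ¬ (L n (θtil n k) ≤ (1 + τstar) * L n (θtil n (k+1))) := fun hcon =>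
          hnot (Or.inl ⟨hk1, by omega, hcon⟩)
        push_neg at hgt
        nlinarith
  have hEpos : ∀ k, 1 ≤ k → k ≤ ktil n τstar → 0 < L n (θtil n k) :=
    fun k h1 h2 => hchain (ktil n τstar - k) k (by omega) h1
  have hKS : L n (θtil n (ktil n τstar)) ≤ (1 + τstar) * L n (θtil n (ktil n τstar + 1)) := by
    rcases hKmem with h | h
    · exact h.2.2
    · rw [Set.mem_singleton_iff] at h
      exfalso; omega
  have hEK1 : 0 < L n (θtil n (ktil n τstar + 1)) := by nlinarith
  -- the minimiser
  have hfin : ((fun k => L n (θtil n k)) '' {k | 1 ≤ k ∧ k ≤ ktil n τstar + 1}).Finite :=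
    Set.Finite.image _ ((Set.finite_Icc 1 (ktil n τstar + 1)).subset
      (fun x hx => Set.mem_Icc.mpr ⟨hx.1, hx.2⟩))
  have hne : ((fun k => L n (θtil n k)) '' {k | 1 ≤ k ∧ k ≤ ktil n τstar + 1}).Nonempty :=
    ⟨L n (θtil n 1), 1, ⟨le_refl 1, by omega⟩, rfl⟩
  have hmem2 := hne.csInf_mem hfin
  obtain ⟨k₀, hk₀mem, hk₀val⟩ := hmem2
  have hmstar_eq : minIdx (ktil n τstar + 1) (fun k => L n (θtil n k)) = L n (θtil n k₀) := by
    rw [minIdx]; exact hk₀val.symm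
  have hk₀pos : 0 < L n (θtil n k₀) := by
    rcases Nat.lt_or_ge k₀ (ktil n τstar + 1) with h | h
    · exact hEpos k₀ hk₀mem.1 (by omega)
    · have h2 : k₀ ≤ ktil n τstar + 1 := hk₀mem.2
      have h3 : k₀ = ktil n τstar + 1 := by omega
      rw [h3]; exact hEK1
  have hk₀int : Integrable (fun ω => ℓ n (θtil n k₀) ω - ℓstar n ω) (P n) := by
    by_contra hc
    have h0 : L n (θtil n k₀) = 0 := by
      rw [hL n (θtil n k₀)]
      exact integral_undef hc
    linarith
  -- apply the core lemma
  have hcore := main_core (P n) (θtil n) (fun k => L n (θtil n k))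
    (fun k ω => ℓ n (θtil n k) ω) (ℓstar n) (L n) (hconv n) (fun k => rfl)
    (fun k => hL n (θtil n k)) (M n) hM2 n hn2 lam ξ1 ξ2 ξ3 α hlam hξ1 hξ2 hξ3 hα
    (fun k hk => hA1n k hk (θtil n k) (hθtil n k hk))
    (ktil n τstar) hK1 hKM
    (minIdx (ktil n τstar + 1) (fun k => L n (θtil n k)))
    (by rw [hmstar_eq]; exact hk₀pos)
    k₀ hk₀mem.1 hk₀mem.2 (by rw [hmstar_eq]) hk₀int
    (mtil n) hmtle
    (ξ3/(ξ1*ξ2) + 2/(ξ1*ξ2) + 3*lam/(ξ1*α) + 3/ξ1) le_rfl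
  set Egood := {ω |
      L n (∑ k ∈ Finset.Icc 1 (mtil n ω),
        (Real.exp (-(α * ℓ n (θtil n k) ω))
          / ∑ j ∈ Finset.Icc 1 (mtil n ω), Real.exp (-(α * ℓ n (θtil n j) ω)))
          • θtil n k)
        ≤ (ξ3/(ξ1*ξ2) + 2/(ξ1*ξ2) + 3*lam/(ξ1*α) + 3/ξ1)
          * (minIdx (ktil n τstar + 1) (fun k => L n (θtil n k)) + Real.log ((M n : ℝ) * n))}
    with hEgood
  have hcore' : P n {ω | ktil n τstar + 1 ≤ mtil n ω} ≤ P n Egood + ENNReal.ofReal ((n:ℝ)⁻¹) :=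
    hcore
  have hEne : P n Egood ≠ ⊤ := measure_ne_top _ _
  have h5 : (P n {ω | ktil n τstar + 1 ≤ mtil n ω}).toReal
      ≤ (P n Egood).toReal + (n:ℝ)⁻¹ := by
    have h6 := ENNReal.toReal_mono (by
      exact ENNReal.add_ne_top.mpr ⟨hEne, ENNReal.ofReal_ne_top⟩) hcore'
    rwa [ENNReal.toReal_add hEne ENNReal.ofReal_ne_top,
      ENNReal.toReal_ofReal hninv] at h6
  linarith
end
end

section
/- For any m ∈ [M_n], let Π_{n,≤m} := m^{−1} Σ_{k=1}^{m} Π_{n,k} and let Q̂_{n,≤m} := Σ_{k=1}^{m} ω_k Q̂_{n,k} with weights ω_k := exp(−mVFE_n(k)) / Σ_{k'=1}^{m} exp(−mVFE_n(k')). Then, pointwise in the sample, λ ∫ ℓ_n(θ) dQ̂_{n,≤m}(θ) + KL(Q̂_{n,≤m}, Π_{n,≤m}) ≤ log m + inf over probability weights (ω̃_1,…,ω̃_m) in the simplex of Σ_{k=1}^{m} ω̃_k · log( ω̃_k / exp(−mVFE_n(k)) ), which in turn is at most log m + min_{k ∈ [m]} mVFE_n(k). -/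
open MeasureTheory Filter Set ENNReal NNReal

section MyHelpers

/-- Gibbs inequality, real version. -/
lemma my_gibbs_real (S : Finset ℕ) (v e : ℕ → ℝ) (hv : ∀ k ∈ S, 0 ≤ v k)
    (hsum : ∑ k ∈ S, v k = 1) (he0 : ∀ k ∈ S, 0 ≤ e k)
    (hZ : 0 < ∑ k ∈ S, e k) (hpos : ∀ k ∈ S, 0 < v k → 0 < e k) :
    -(Real.log (∑ k ∈ S, e k)) ≤ ∑ k ∈ S, v k * (Real.log (v k) - Real.log (e k)) := by
  set Z := ∑ k ∈ S, e k with hZdef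
  have key : ∀ k ∈ S, v k - e k / Z ≤ v k * (Real.log (v k) - Real.log (e k) + Real.log Z) := by
    intro k hk
    rcases eq_or_lt_of_le (hv k hk) with h0 | h0
    · simp only [← h0, zero_mul, zero_sub, neg_nonpos]
      exact div_nonneg (he0 k hk) hZ.le
    · have hek := hpos k hk h0
      have hx : 0 < e k / (v k * Z) := div_pos hek (mul_pos h0 hZ)
      have hlog := Real.log_le_sub_one_of_pos hx
      have heq : Real.log (e k / (v k * Z)) = Real.log (e k) - (Real.log (v k) + Real.log Z) := by
        rw [Real.log_div hek.ne' (mul_pos h0 hZ).ne', Real.log_mul h0.ne' hZ.ne']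
      rw [heq] at hlog
      have h2 : 1 - e k / (v k * Z) ≤ Real.log (v k) - Real.log (e k) + Real.log Z := by
        linarith
      have h3 := mul_le_mul_of_nonneg_left h2 h0.le
      calc v k - e k / Z = v k * (1 - e k / (v k * Z)) := by
            field_simp
          _ ≤ v k * (Real.log (v k) - Real.log (e k) + Real.log Z) := h3
  have hsum2 : ∑ k ∈ S, (v k - e k / Z) ≤
      ∑ k ∈ S, v k * (Real.log (v k) - Real.log (e k) + Real.log Z) :=
    Finset.sum_le_sum key
  rw [Finset.sum_sub_distrib, ← Finset.sum_div, hsum] at hsum2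
  have hZZ : (1 : ℝ) - Z / Z = 0 := by rw [div_self hZ.ne', sub_self]
  have expand : ∑ k ∈ S, v k * (Real.log (v k) - Real.log (e k) + Real.log Z)
      = (∑ k ∈ S, v k * (Real.log (v k) - Real.log (e k))) + Real.log Z := by
    simp only [mul_add]
    rw [Finset.sum_add_distrib, ← Finset.sum_mul, hsum, one_mul]
  rw [expand] at hsum2
  linarith

/-- entropy bound : `∑ w k * log (m * w k) ≥ 0` for probability weights supported
on a set of at most `m` elements. -/
lemma my_entropy (K : Finset ℕ) (m : ℕ) (hcard : K.card ≤ m) (hm : 0 < m) (w : ℕ → ℝ)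
    (hw : ∀ k ∈ K, 0 ≤ w k) (hsum : ∑ k ∈ K, w k = 1) :
    0 ≤ ∑ k ∈ K, w k * Real.log (m * w k) := by
  have he0 : ∀ k ∈ K, (0:ℝ) ≤ (m : ℝ)⁻¹ := fun k _ => by positivity
  have hKne : K.Nonempty := by
    by_contra h
    rw [Finset.not_nonempty_iff_eq_empty] at h
    simp [h] at hsum
  have hZ : (0:ℝ) < ∑ _k ∈ K, (m:ℝ)⁻¹ := by
    rw [Finset.sum_const]
    have h1 : (0:ℝ) < (m:ℝ)⁻¹ := by positivity
    have h2 : (0:ℝ) < (K.card : ℝ) := by exact_mod_cast Finset.card_pos.2 hKne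
    rw [nsmul_eq_mul]
    positivity
  have hmain := my_gibbs_real K w (fun _ => (m:ℝ)⁻¹) hw hsum he0 hZ (fun k _ _ => by positivity)
  have heq : ∑ k ∈ K, w k * (Real.log (w k) - Real.log ((m:ℝ)⁻¹))
      = ∑ k ∈ K, w k * Real.log (m * w k) := by
    refine Finset.sum_congr rfl fun k hk => ?_
    rcases eq_or_lt_of_le (hw k hk) with h0 | h0
    · simp [← h0]
    · rw [Real.log_inv, Real.log_mul (by positivity) h0.ne']
      ring
  rw [heq] at hmain
  refine le_trans ?_ hmain
  rw [Finset.sum_const, nsmul_eq_mul, neg_nonneg]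
  refine Real.log_nonpos (by positivity) ?_
  rw [← div_eq_mul_inv, div_le_one (by positivity)]
  exact_mod_cast hcard

lemma expNeg_nonneg (x : ℝ≥0∞) : 0 ≤ expNeg x := by
  unfold expNeg; split <;> [rfl; positivity]

lemma expNeg_le_one (x : ℝ≥0∞) : expNeg x ≤ 1 := by
  unfold expNeg; split
  · norm_num
  · exact Real.exp_le_one_iff.2 (neg_nonpos.2 ENNReal.toReal_nonneg)

lemma expNeg_pos {x : ℝ≥0∞} (hx : x ≠ ⊤) : 0 < expNeg x := by
  unfold expNeg; rw [if_neg hx]; positivity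

lemma expNeg_eq_zero {x : ℝ≥0∞} (h : expNeg x = 0) : x = ⊤ := by
  by_contra hx
  exact (expNeg_pos hx).ne' h

lemma my_ereal_coe_sum (S : Finset ℕ) (f : ℕ → ℝ) :
    ((∑ k ∈ S, f k : ℝ) : EReal) = ∑ k ∈ S, ((f k : ℝ) : EReal) := by
  induction S using Finset.cons_induction with
  | empty => simp
  | cons a s ha ih => rw [Finset.sum_cons, Finset.sum_cons, EReal.coe_add, ih]

lemma my_ereal_sum_ne_bot (S : Finset ℕ) (f : ℕ → EReal) (h : ∀ k ∈ S, f k ≠ ⊥) :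
    ∑ k ∈ S, f k ≠ ⊥ := by
  induction S using Finset.cons_induction with
  | empty => simp
  | cons a s ha ih =>
    rw [Finset.sum_cons]
    rw [ne_eq, EReal.add_eq_bot_iff]
    push_neg
    exact ⟨h a (Finset.mem_cons_self a s), ih fun k hk => h k (Finset.mem_cons_of_mem hk)⟩

lemma my_ereal_sum_eq_top (S : Finset ℕ) (f : ℕ → EReal) (h : ∀ k ∈ S, f k ≠ ⊥)
    (h2 : ∃ k ∈ S, f k = ⊤) : ∑ k ∈ S, f k = ⊤ := by
  induction S using Finset.cons_induction with
  | empty => simp at h2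
  | cons a s ha ih =>
    rw [Finset.sum_cons]
    rcases h2 with ⟨k, hk, hktop⟩
    rcases Finset.mem_cons.1 hk with rfl | hks
    · rw [hktop]
      exact EReal.top_add_of_ne_bot
        (my_ereal_sum_ne_bot s f fun j hj => h j (Finset.mem_cons_of_mem hj))
    · rw [ih (fun j hj => h j (Finset.mem_cons_of_mem hj)) ⟨k, hks, hktop⟩]
      exact EReal.add_top_of_ne_bot (h a (Finset.mem_cons_self a s))

lemma my_ennreal_ereal_coe_of_ne_top {x : ℝ≥0∞} (hx : x ≠ ⊤) :
    (x : EReal) = ((x.toReal : ℝ) : EReal) := by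
  conv_lhs => rw [← ENNReal.ofReal_toReal hx]
  rw [EReal.coe_ennreal_ofReal, max_eq_left ENNReal.toReal_nonneg]

/-- the EReal-valued Gibbs lower bound on the weighted free energy sum. -/
lemma my_G_lower (S : Finset ℕ) (E : ℕ → ℝ≥0∞) (v : ℕ → ℝ)
    (hv0 : ∀ k ∈ S, 0 ≤ v k) (hsum : ∑ k ∈ S, v k = 1) :
    ((-(Real.log (∑ k ∈ S, expNeg (E k))) : ℝ) : EReal)
      ≤ ∑ k ∈ S, ((v k : ℝ) : EReal) * (((Real.log (v k) : ℝ) : EReal) + (E k : EReal)) := by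
  by_cases hcase : ∃ k ∈ S, 0 < v k ∧ E k = ⊤
  · rw [my_ereal_sum_eq_top]
    · exact le_top
    · intro k hk
      rcases eq_or_lt_of_le (hv0 k hk) with h0 | h0
      · simp [← h0]
      · by_cases hEk : E k = ⊤
        · rw [hEk, EReal.coe_ennreal_top, EReal.add_top_of_ne_bot (EReal.coe_ne_bot _),
            EReal.coe_mul_top_of_pos h0]
          exact top_ne_bot
        · rw [my_ennreal_ereal_coe_of_ne_top hEk, ← EReal.coe_add, ← EReal.coe_mul]
          exact EReal.coe_ne_bot _
    · rcases hcase with ⟨k, hk, hvk, hEk⟩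
      refine ⟨k, hk, ?_⟩
      rw [hEk, EReal.coe_ennreal_top, EReal.add_top_of_ne_bot (EReal.coe_ne_bot _)]
      exact EReal.coe_mul_top_of_pos hvk
  · -- all k with v k > 0 have E k ≠ ⊤
    push_neg at hcase
    have hfin : ∀ k ∈ S, 0 < v k → E k ≠ ⊤ := fun k hk hv => hcase k hk hv
    -- some k has v k > 0
    obtain ⟨k₀, hk₀, hv₀⟩ : ∃ k ∈ S, 0 < v k := by
      by_contra h
      push_neg at h
      have : ∑ k ∈ S, v k = 0 :=
        Finset.sum_eq_zero fun k hk => le_antisymm (h k hk) (hv0 k hk)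
      rw [hsum] at this; norm_num at this
    have hZ : 0 < ∑ k ∈ S, expNeg (E k) := by
      refine Finset.sum_pos' (fun k _ => expNeg_nonneg _) ⟨k₀, hk₀, expNeg_pos (hfin k₀ hk₀ hv₀)⟩
    have hgibbs := my_gibbs_real S v (fun k => expNeg (E k)) hv0 hsum
      (fun k _ => expNeg_nonneg _) hZ (fun k hk hv => expNeg_pos (hfin k hk hv))
    -- convert RHS of goal to real
    have hconv : ∑ k ∈ S, ((v k : ℝ) : EReal) * (((Real.log (v k) : ℝ) : EReal) + (E k : EReal))
        = ((∑ k ∈ S, v k * (Real.log (v k) - Real.log (expNeg (E k))) : ℝ) : EReal) := by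
      rw [my_ereal_coe_sum]
      refine Finset.sum_congr rfl fun k hk => ?_
      rcases eq_or_lt_of_le (hv0 k hk) with h0 | h0
      · simp [← h0]
      · have hne := hfin k hk h0
        rw [my_ennreal_ereal_coe_of_ne_top hne, ← EReal.coe_add, ← EReal.coe_mul]
        congr 1
        have : Real.log (expNeg (E k)) = -(E k).toReal := by
          unfold expNeg
          rw [if_neg hne, Real.log_exp]
        rw [this]
        ring
    rw [hconv]
    exact_mod_cast hgibbs

lemma my_ennreal_cancel (x c g : ℝ≥0∞) (hg : g ≠ ⊤) (hc0 : c ≠ 0) (hct : c ≠ ⊤) :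
    g * (x / (c * g)) ≤ c⁻¹ * x := by
  rcases eq_or_ne g 0 with rfl | hg0
  · simp
  · refine le_of_eq ?_
    rw [div_eq_mul_inv, ENNReal.mul_inv (Or.inl hc0) (Or.inl hct)]
    calc g * (x * (c⁻¹ * g⁻¹)) = (c⁻¹ * x) * (g⁻¹ * g) := by ring
      _ = c⁻¹ * x := by rw [ENNReal.inv_mul_cancel hg0 hg, mul_one]

lemma my_mul_inv_le_one (a : ℝ≥0∞) : a * a⁻¹ ≤ 1 := by
  rcases eq_or_ne a 0 with rfl | h0
  · simp
  · rcases eq_or_ne a ⊤ with rfl | ht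
    · simp
    · rw [ENNReal.mul_inv_cancel h0 ht]

lemma my_ennnorm_le (x : ℝ) : (‖x‖₊ : ℝ≥0∞) ≤ ENNReal.ofReal x + ENNReal.ofReal (-x) := by
  rcases le_total 0 x with h | h
  · rw [← enorm_eq_nnnorm, Real.enorm_eq_ofReal h]
    exact le_add_right le_rfl
  · rw [← enorm_eq_nnnorm, Real.enorm_eq_ofReal_abs, abs_of_nonpos h]
    exact le_add_left le_rfl

lemma my_core {Θ : Type*} [MeasurableSpace Θ] (S : Finset ℕ) (m : ℕ)
    (hm : 0 < m) (hcard : S.card ≤ m)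
    (P Q : ℕ → Measure Θ) (hP : ∀ k, IsProbabilityMeasure (P k))
    (hQ : ∀ k, IsProbabilityMeasure (Q k))
    (w : ℕ → ℝ) (hw0 : ∀ k ∈ S, 0 ≤ w k) (hwsum : ∑ k ∈ S, w k = 1)
    (hac : ∀ k ∈ S, 0 < w k → Q k ≪ P k)
    (hint : ∀ k ∈ S, 0 < w k → Integrable (llr (Q k) (P k)) (Q k)) :
    (∑ k ∈ S, ENNReal.ofReal (w k) • Q k) ≪ ((m : ℝ≥0∞)⁻¹ • ∑ k ∈ S, P k) ∧
    Integrable (llr (∑ k ∈ S, ENNReal.ofReal (w k) • Q k) ((m : ℝ≥0∞)⁻¹ • ∑ k ∈ S, P k))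
      (∑ k ∈ S, ENNReal.ofReal (w k) • Q k) ∧
    ∫ θ, llr (∑ k ∈ S, ENNReal.ofReal (w k) • Q k) ((m : ℝ≥0∞)⁻¹ • ∑ k ∈ S, P k) θ
        ∂(∑ k ∈ S, ENNReal.ofReal (w k) • Q k)
      ≤ ∑ k ∈ S, w k * (Real.log (m * w k) + ∫ θ, llr (Q k) (P k) θ ∂(Q k)) := by
  have hm0 : (m : ℝ≥0∞) ≠ 0 := by exact_mod_cast hm.ne'
  have hmt : (m : ℝ≥0∞) ≠ ⊤ := natCast_ne_top m
  have hmR : (0:ℝ) < m := by exact_mod_cast hm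
  set Pi : Measure Θ := (m : ℝ≥0∞)⁻¹ • ∑ k ∈ S, P k with hPi
  set Qa : Measure Θ := ∑ k ∈ S, ENNReal.ofReal (w k) • Q k with hQa
  have hsmul_Pi : (m : ℝ≥0∞) • Pi = ∑ k ∈ S, P k := by
    rw [hPi, smul_smul, ENNReal.mul_inv_cancel hm0 hmt, one_smul]
  have hPk_le : ∀ k ∈ S, P k ≤ (m : ℝ≥0∞) • Pi := by
    intro k hk
    rw [hsmul_Pi]
    refine Measure.le_iff.2 fun t ht => ?_
    rw [Measure.finset_sum_apply]
    exact Finset.single_le_sum (f := fun j => P j t) (fun j _ => zero_le) hk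
  have hQa_apply : ∀ t : Set Θ, Qa t = ∑ k ∈ S, ENNReal.ofReal (w k) * Q k t := by
    intro t
    rw [hQa, Measure.finset_sum_apply]
    exact Finset.sum_congr rfl fun k _ => by rw [Measure.smul_apply, smul_eq_mul]
  have hQauniv : Qa Set.univ = 1 := by
    rw [hQa_apply]
    have h1 : ∀ k ∈ S, ENNReal.ofReal (w k) * Q k Set.univ = ENNReal.ofReal (w k) := by
      intro k _
      haveI := hQ k
      rw [measure_univ, mul_one]
    rw [Finset.sum_congr rfl h1, ← ENNReal.ofReal_sum_of_nonneg hw0, hwsum, ofReal_one]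
  haveI hQaprob : IsProbabilityMeasure Qa := ⟨hQauniv⟩
  have hPiuniv : Pi Set.univ ≤ 1 := by
    rw [hPi, Measure.smul_apply, smul_eq_mul, Measure.finset_sum_apply]
    have h1 : ∀ k ∈ S, P k Set.univ = 1 := fun k _ => by haveI := hP k; exact measure_univ
    rw [Finset.sum_congr rfl h1, Finset.sum_const, nsmul_eq_mul, mul_one]
    rw [ENNReal.inv_mul_le_iff hm0 hmt, mul_one]
    exact_mod_cast hcard
  haveI hPifin : IsFiniteMeasure Pi := ⟨lt_of_le_of_lt hPiuniv one_lt_top⟩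
  -- absolute continuity
  have hQk_ac_Pi : ∀ k ∈ S, 0 < w k → Q k ≪ Pi := by
    intro k hk hwk
    exact ((hac k hk hwk).trans (Measure.absolutelyContinuous_of_le (hPk_le k hk))).trans
      Measure.smul_absolutelyContinuous
  have hQa_ac : Qa ≪ Pi := by
    refine Measure.AbsolutelyContinuous.mk fun t ht h0 => ?_
    rw [hQa_apply]
    refine Finset.sum_eq_zero fun k hk => ?_
    rcases lt_or_ge 0 (w k) with hwk | hwk
    · rw [(hQk_ac_Pi k hk hwk) h0, mul_zero]
    · rw [ENNReal.ofReal_eq_zero.2 hwk, zero_mul]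
  have hQk_ac_Qa : ∀ k ∈ S, 0 < w k → Q k ≪ Qa := by
    intro k hk hwk
    refine Measure.AbsolutelyContinuous.mk fun t ht h0 => ?_
    rw [hQa_apply] at h0
    have h1 := (Finset.sum_eq_zero_iff.1 h0) k hk
    rcases mul_eq_zero.1 h1 with h | h
    · exact absurd h (by simp [ENNReal.ofReal_eq_zero, not_le, hwk])
    · exact h
  -- densities
  set f : Θ → ℝ≥0∞ := Qa.rnDeriv Pi with hfdef
  have hfmeas : Measurable f := Measure.measurable_rnDeriv _ _
  set gg : ℕ → Θ → ℝ≥0∞ := fun k θ => ENNReal.ofReal (((Q k).rnDeriv (P k) θ).toReal)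
    with hggdef
  have hggmeas : ∀ k, Measurable (gg k) :=
    fun k => (Measure.measurable_rnDeriv _ _).ennreal_toReal.ennreal_ofReal
  have hggtop : ∀ k θ, gg k θ ≠ ⊤ := fun k θ => ofReal_ne_top
  have hF5 : ∀ k ∈ S, 0 < w k → (P k).withDensity (gg k) = Q k := by
    intro k hk hwk
    have h1 : gg k =ᵐ[P k] (Q k).rnDeriv (P k) := by
      filter_upwards [Measure.rnDeriv_lt_top (Q k) (P k)] with θ hθ
      exact ofReal_toReal hθ.ne
    rw [withDensity_congr_ae h1, Measure.withDensity_rnDeriv_eq _ _ (hac k hk hwk)]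
  -- lower bound on f
  have hF8 : ∀ k ∈ S, 0 < w k →
      (fun θ => ENNReal.ofReal (w k) * (Q k).rnDeriv Pi θ) ≤ᵐ[Pi] f := by
    intro k hk hwk
    refine ae_le_of_forall_setLIntegral_le_of_sigmaFinite
      ((Measure.measurable_rnDeriv _ _).const_mul _) fun t ht _ => ?_
    rw [hfdef, lintegral_const_mul _ (Measure.measurable_rnDeriv _ _),
      Measure.setLIntegral_rnDeriv (hQk_ac_Pi k hk hwk),
      Measure.setLIntegral_rnDeriv hQa_ac, hQa_apply]
    exact Finset.single_le_sum (f := fun j => ENNReal.ofReal (w j) * Q j t)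
      (fun j _ => zero_le) hk
  -- upper bound on rnDeriv (Q k) Pi
  have hF9 : ∀ k ∈ S, 0 < w k →
      (Q k).rnDeriv Pi ≤ᵐ[Pi] fun θ => (m : ℝ≥0∞) * gg k θ := by
    intro k hk hwk
    refine ae_le_of_forall_setLIntegral_le_of_sigmaFinite
      (Measure.measurable_rnDeriv _ _) fun t ht _ => ?_
    rw [Measure.setLIntegral_rnDeriv (hQk_ac_Pi k hk hwk), ← hF5 k hk hwk,
      withDensity_apply _ ht, lintegral_const_mul _ (hggmeas k)]
    calc ∫⁻ θ in t, gg k θ ∂(P k) ≤ ∫⁻ θ in t, gg k θ ∂((m : ℝ≥0∞) • Pi) :=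
          lintegral_mono' (Measure.restrict_mono subset_rfl (hPk_le k hk)) le_rfl
      _ = (m : ℝ≥0∞) * ∫⁻ θ in t, gg k θ ∂Pi := setLIntegral_smul_measure _ _ _
  -- J integrals
  have hJsum : ∑ k ∈ S, ∫⁻ θ, f θ ∂(P k) = (m : ℝ≥0∞) := by
    rw [hfdef, ← lintegral_finset_sum_measure, ← hsmul_Pi, lintegral_smul_measure,
      Measure.lintegral_rnDeriv hQa_ac, hQauniv, smul_eq_mul, mul_one]
  have hJne : ∀ k ∈ S, ∫⁻ θ, f θ ∂(P k) ≠ ⊤ := by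
    intro k hk
    have hb : (∑ j ∈ S, ∫⁻ θ, f θ ∂(P j)) ≠ ⊤ := by rw [hJsum]; exact hmt
    exact ne_top_of_le_ne_top hb
      (Finset.single_le_sum (f := fun j => ∫⁻ θ, f θ ∂(P j)) (fun j _ => zero_le) hk)
  -- the per-k correction term and ratio
  set sk : ℕ → Θ → ℝ := fun k θ => llr Qa Pi θ - Real.log (m * w k) - llr (Q k) (P k) θ
    with hskdef
  have hskmeas : ∀ k, Measurable (sk k) :=
    fun k => ((measurable_llr _ _).sub measurable_const).sub (measurable_llr _ _)
  set u : ℕ → Θ → ℝ :=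
    fun k θ => (f θ).toReal / ((m * w k) * (((Q k).rnDeriv (P k) θ).toReal)) with hudef
  have humeas : ∀ k, Measurable (u k) := fun k =>
    hfmeas.ennreal_toReal.div (((Measure.measurable_rnDeriv _ _).ennreal_toReal).const_mul _)
  have hu0 : ∀ k ∈ S, ∀ θ, 0 ≤ u k θ := by
    intro k hk θ
    exact div_nonneg toReal_nonneg
      (mul_nonneg (mul_nonneg hmR.le (hw0 k hk)) toReal_nonneg)
  -- main per-k facts
  have hper : ∀ k ∈ S, 0 < w k →
      Integrable (llr Qa Pi) (Q k) ∧
      ∫ θ, llr Qa Pi θ ∂(Q k) ≤ Real.log (m * w k) + (∫ θ, llr (Q k) (P k) θ ∂(Q k))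
        + ((m * w k)⁻¹ * (∫⁻ θ, f θ ∂(P k)).toReal - 1) := by
    intro k hk hwk
    have hacPi := hQk_ac_Pi k hk hwk
    have hacQa := hQk_ac_Qa k hk hwk
    have hmw : (0:ℝ) < m * w k := by positivity
    have hc0 : ENNReal.ofReal (m * w k) ≠ 0 := by
      simp [ENNReal.ofReal_eq_zero, not_le, hmw, hm.ne', hwk]
    -- a.e. facts
    have A1 : ∀ᵐ θ ∂(Q k), 0 < f θ :=
      (Measure.rnDeriv_pos hQa_ac).filter_mono hacQa.ae_le
    have A2 : ∀ᵐ θ ∂(Q k), f θ < ⊤ :=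
      (Measure.rnDeriv_lt_top Qa Pi).filter_mono hacPi.ae_le
    have A3 : ∀ᵐ θ ∂(Q k), 0 < (Q k).rnDeriv Pi θ := Measure.rnDeriv_pos hacPi
    have A4 : ∀ᵐ θ ∂(Q k), (Q k).rnDeriv Pi θ < ⊤ :=
      (Measure.rnDeriv_lt_top (Q k) Pi).filter_mono hacPi.ae_le
    have A5 : ∀ᵐ θ ∂(Q k), 0 < (Q k).rnDeriv (P k) θ := Measure.rnDeriv_pos (hac k hk hwk)
    have A6 : ∀ᵐ θ ∂(Q k), (Q k).rnDeriv (P k) θ < ⊤ :=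
      (Measure.rnDeriv_lt_top (Q k) (P k)).filter_mono (hac k hk hwk).ae_le
    have A7 : ∀ᵐ θ ∂(Q k), ENNReal.ofReal (w k) * (Q k).rnDeriv Pi θ ≤ f θ :=
      (hF8 k hk hwk).filter_mono hacPi.ae_le
    have A8 : ∀ᵐ θ ∂(Q k), (Q k).rnDeriv Pi θ ≤ (m : ℝ≥0∞) * gg k θ :=
      (hF9 k hk hwk).filter_mono hacPi.ae_le
    have hmain : ∀ᵐ θ ∂(Q k),
        sk k θ = Real.log (u k θ) ∧
        sk k θ ≤ u k θ - 1 ∧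
        -(sk k θ) ≤ (Real.log m + |llr (Q k) (P k) θ|) + (-(llr (Q k) Pi θ)) ∧
        ENNReal.ofReal (u k θ) = f θ / (ENNReal.ofReal (m * w k) * gg k θ) ∧
        ENNReal.ofReal (-(llr (Q k) Pi θ)) ≤ ((Q k).rnDeriv Pi θ)⁻¹ := by
      filter_upwards [A1, A2, A3, A4, A5, A6, A7, A8] with θ h1 h2 h3 h4 h5 h6 h7 h8
      have hF : 0 < (f θ).toReal := toReal_pos h1.ne' h2.ne
      have hR : 0 < ((Q k).rnDeriv Pi θ).toReal := toReal_pos h3.ne' h4.ne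
      have hD : 0 < ((Q k).rnDeriv (P k) θ).toReal := toReal_pos h5.ne' h6.ne
      have hwR : w k * ((Q k).rnDeriv Pi θ).toReal ≤ (f θ).toReal := by
        have := (toReal_le_toReal (by exact mul_ne_top ofReal_ne_top h4.ne) h2.ne).2 h7
        rwa [toReal_mul, toReal_ofReal hwk.le] at this
      have hRD : ((Q k).rnDeriv Pi θ).toReal ≤ m * ((Q k).rnDeriv (P k) θ).toReal := by
        have := (toReal_le_toReal h4.ne (by exact mul_ne_top hmt (hggtop k θ))).2 h8
        rwa [toReal_mul, ENNReal.toReal_natCast, toReal_ofReal toReal_nonneg] at this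
      have hgg_toReal : (gg k θ).toReal = ((Q k).rnDeriv (P k) θ).toReal := by
        rw [hggdef]
        exact toReal_ofReal toReal_nonneg
      have hllrQaPi : llr Qa Pi θ = Real.log (f θ).toReal := rfl
      have hllrQkPi : llr (Q k) Pi θ = Real.log ((Q k).rnDeriv Pi θ).toReal := rfl
      have hllrk : llr (Q k) (P k) θ = Real.log ((Q k).rnDeriv (P k) θ).toReal := rfl
      have hupos : 0 < u k θ := div_pos hF (by positivity)
      have hueq : sk k θ = Real.log (u k θ) := by
        rw [hskdef]
        simp only [hudef]
        rw [Real.log_div hF.ne' (by positivity), Real.log_mul hmw.ne' hD.ne',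
          hllrQaPi, hllrk]
        ring
      refine ⟨hueq, ?_, ?_, ?_, ?_⟩
      · rw [hueq]
        exact Real.log_le_sub_one_of_pos hupos
      · -- lower bound on sk
        have hlogF : Real.log (w k) + Real.log ((Q k).rnDeriv Pi θ).toReal
            ≤ Real.log (f θ).toReal := by
          rw [← Real.log_mul hwk.ne' hR.ne']
          exact Real.log_le_log (by positivity) hwR
        have hsplit : Real.log (m * w k) = Real.log m + Real.log (w k) :=
          Real.log_mul hmR.ne' hwk.ne'
        have h1 : Real.log ((Q k).rnDeriv Pi θ).toReal - Real.log m
              - Real.log ((Q k).rnDeriv (P k) θ).toReal ≤ sk k θ := by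
          rw [hskdef]
          simp only [hllrQaPi, hllrk]
          rw [hsplit]
          linarith
        rw [hllrQkPi, hllrk]
        have habs : Real.log ((Q k).rnDeriv (P k) θ).toReal
            ≤ |Real.log ((Q k).rnDeriv (P k) θ).toReal| := le_abs_self _
        linarith
      · -- ofReal u = f / (c * gg)
        rw [hudef]
        simp only
        rw [ENNReal.ofReal_div_of_pos (by positivity), ofReal_toReal h2.ne,
          ENNReal.ofReal_mul hmw.le]
      · -- ofReal (-llr (Q k) Pi) ≤ (rnDeriv)⁻¹
        rw [hllrQkPi, ← Real.log_inv]
        have hstep : Real.log ((((Q k).rnDeriv Pi θ).toReal)⁻¹)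
            ≤ (((Q k).rnDeriv Pi θ).toReal)⁻¹ :=
          (Real.log_le_sub_one_of_pos (by positivity)).trans (sub_le_self _ zero_le_one)
        refine le_trans (ENNReal.ofReal_le_ofReal hstep) (le_of_eq ?_)
        rw [ENNReal.ofReal_inv_of_pos hR, ofReal_toReal h4.ne]
    -- lintegral bound for u
    have hu_lint : ∫⁻ θ, ENNReal.ofReal (u k θ) ∂(Q k)
        ≤ (ENNReal.ofReal (m * w k))⁻¹ * ∫⁻ θ, f θ ∂(P k) := by
      have he : ∫⁻ θ, ENNReal.ofReal (u k θ) ∂(Q k)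
          = ∫⁻ θ, f θ / (ENNReal.ofReal (m * w k) * gg k θ) ∂(Q k) :=
        lintegral_congr_ae (hmain.mono fun θ h => h.2.2.2.1)
      rw [he, ← hF5 k hk hwk, lintegral_withDensity_eq_lintegral_mul _ (hggmeas k)
        (g := fun θ => f θ / (ENNReal.ofReal (m * w k) * gg k θ))
        (hfmeas.div (measurable_const.mul (hggmeas k)))]
      calc ∫⁻ θ, (gg k * fun θ => f θ / (ENNReal.ofReal (m * w k) * gg k θ)) θ ∂(P k)
          ≤ ∫⁻ θ, (ENNReal.ofReal (m * w k))⁻¹ * f θ ∂(P k) := by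
            refine lintegral_mono fun θ => ?_
            exact my_ennreal_cancel (f θ) _ (gg k θ) (hggtop k θ) hc0 ofReal_ne_top
        _ = (ENNReal.ofReal (m * w k))⁻¹ * ∫⁻ θ, f θ ∂(P k) := lintegral_const_mul _ hfmeas
    have hu_lint_ne : ∫⁻ θ, ENNReal.ofReal (u k θ) ∂(Q k) ≠ ⊤ :=
      ne_top_of_le_ne_top (by
        exact mul_ne_top (by simp [hc0, hm.ne', hwk]) (hJne k hk)) hu_lint
    -- lintegral bound for the negative part
    have hneg_lint : ∫⁻ θ, ENNReal.ofReal (-(llr (Q k) Pi θ)) ∂(Q k) ≤ 1 := by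
      calc ∫⁻ θ, ENNReal.ofReal (-(llr (Q k) Pi θ)) ∂(Q k)
          ≤ ∫⁻ θ, ((Q k).rnDeriv Pi θ)⁻¹ ∂(Q k) :=
            lintegral_mono_ae (hmain.mono fun θ h => h.2.2.2.2)
        _ ≤ 1 := by
            set r : Θ → ℝ≥0∞ := (Q k).rnDeriv Pi with hrdef
            have hrmeas : Measurable r := Measure.measurable_rnDeriv _ _
            have hQeq : Pi.withDensity r = Q k := Measure.withDensity_rnDeriv_eq (Q k) Pi hacPi
            rw [← hQeq, lintegral_withDensity_eq_lintegral_mul _ hrmeas (g := fun θ => (r θ)⁻¹) hrmeas.inv]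
            calc ∫⁻ θ, (r * fun θ => (r θ)⁻¹) θ ∂Pi
                ≤ ∫⁻ _, 1 ∂Pi := lintegral_mono fun θ => my_mul_inv_le_one _
              _ = Pi Set.univ := lintegral_one
              _ ≤ 1 := hPiuniv
    -- integrability of |llr (Q k) (P k)| part
    have habs_int : Integrable (fun θ => Real.log m + |llr (Q k) (P k) θ|) (Q k) :=
      (integrable_const _).add (hint k hk hwk).abs
    -- integrability of sk
    have hnorm_lt : ∫⁻ θ, (‖sk k θ‖₊ : ℝ≥0∞) ∂(Q k) < ⊤ := by
      have hle : ∀ᵐ θ ∂(Q k), (‖sk k θ‖₊ : ℝ≥0∞) ≤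
          ENNReal.ofReal (u k θ) + (ENNReal.ofReal (Real.log m + |llr (Q k) (P k) θ|)
            + ENNReal.ofReal (-(llr (Q k) Pi θ))) := by
        filter_upwards [hmain] with θ h
        refine le_trans (my_ennnorm_le _) (add_le_add ?_ ?_)
        · exact ENNReal.ofReal_le_ofReal (h.2.1.trans (sub_le_self _ zero_le_one))
        · exact le_trans (ENNReal.ofReal_le_ofReal h.2.2.1) ENNReal.ofReal_add_le
      have hmid : ∫⁻ θ, ENNReal.ofReal (Real.log m + |llr (Q k) (P k) θ|) ∂(Q k) < ⊤ := by
        refine lt_of_le_of_lt (lintegral_mono fun θ => Real.ofReal_le_enorm _) ?_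
        exact habs_int.2
      calc ∫⁻ θ, (‖sk k θ‖₊ : ℝ≥0∞) ∂(Q k)
          ≤ ∫⁻ θ, (ENNReal.ofReal (u k θ) + (ENNReal.ofReal (Real.log m + |llr (Q k) (P k) θ|)
            + ENNReal.ofReal (-(llr (Q k) Pi θ)))) ∂(Q k) := lintegral_mono_ae hle
        _ = (∫⁻ θ, ENNReal.ofReal (u k θ) ∂(Q k)) +
            ((∫⁻ θ, ENNReal.ofReal (Real.log m + |llr (Q k) (P k) θ|) ∂(Q k)) +
             (∫⁻ θ, ENNReal.ofReal (-(llr (Q k) Pi θ)) ∂(Q k))) := by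
            rw [lintegral_add_left ((humeas k).ennreal_ofReal),
              lintegral_add_left (f := fun θ => ENNReal.ofReal (Real.log m + |llr (Q k) (P k) θ|))
                ((measurable_const.add (measurable_llr _ _).abs).ennreal_ofReal)]
        _ < ⊤ := by
            refine ENNReal.add_lt_top.2 ⟨hu_lint_ne.lt_top, ENNReal.add_lt_top.2
              ⟨hmid, lt_of_le_of_lt hneg_lint one_lt_top⟩⟩
    have hsk_int : Integrable (sk k) (Q k) := ⟨(hskmeas k).aestronglyMeasurable, hnorm_lt⟩
    -- integrability of u
    have hu_int : Integrable (u k) (Q k) := by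
      refine ⟨(humeas k).aestronglyMeasurable, ?_⟩
      rw [hasFiniteIntegral_iff_ofReal (Eventually.of_forall (hu0 k hk))]
      exact hu_lint_ne.lt_top
    -- expansion of llr Qa Pi
    have hfg : Integrable (fun θ => Real.log (m * w k) + llr (Q k) (P k) θ) (Q k) := by
      exact (integrable_const _).add (hint k hk hwk)
    have hexp : llr Qa Pi = fun θ => (Real.log (m * w k) + llr (Q k) (P k) θ) + sk k θ := by
      funext θ
      rw [hskdef]
      ring
    have hllr_int : Integrable (llr Qa Pi) (Q k) := by
      rw [hexp]
      exact hfg.add hsk_int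
    refine ⟨hllr_int, ?_⟩
    -- integral computation
    have hQkprob := hQ k
    have hval : ∫ θ, llr Qa Pi θ ∂(Q k) = Real.log (m * w k)
        + (∫ θ, llr (Q k) (P k) θ ∂(Q k)) + ∫ θ, sk k θ ∂(Q k) := by
      rw [hexp, integral_add hfg hsk_int,
        integral_add (integrable_const _) (hint k hk hwk), integral_const, probReal_univ,
        one_smul]
    have hsk_val : ∫ θ, sk k θ ∂(Q k) ≤ (m * w k)⁻¹ * (∫⁻ θ, f θ ∂(P k)).toReal - 1 := by
      have h1 : ∫ θ, sk k θ ∂(Q k) ≤ ∫ θ, (u k θ - 1) ∂(Q k) :=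
        integral_mono_ae hsk_int (hu_int.sub (integrable_const 1))
          (hmain.mono fun θ h => h.2.1)
      have h2 : ∫ θ, (u k θ - 1) ∂(Q k) = (∫ θ, u k θ ∂(Q k)) - 1 := by
        rw [integral_sub hu_int (integrable_const 1), integral_const, probReal_univ,
          one_smul]
      have h3 : ∫ θ, u k θ ∂(Q k) = (∫⁻ θ, ENNReal.ofReal (u k θ) ∂(Q k)).toReal := by
        rw [integral_eq_lintegral_of_nonneg_ae (Eventually.of_forall (hu0 k hk))
          (humeas k).aestronglyMeasurable]
      have h4 : (∫⁻ θ, ENNReal.ofReal (u k θ) ∂(Q k)).toReal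
          ≤ ((ENNReal.ofReal (m * w k))⁻¹ * ∫⁻ θ, f θ ∂(P k)).toReal := by
        refine toReal_mono ?_ hu_lint
        exact mul_ne_top (by simp [hc0, hm.ne', hwk]) (hJne k hk)
      have h5 : ((ENNReal.ofReal (m * w k))⁻¹ * ∫⁻ θ, f θ ∂(P k)).toReal
          = (m * w k)⁻¹ * (∫⁻ θ, f θ ∂(P k)).toReal := by
        rw [toReal_mul, ENNReal.toReal_inv, toReal_ofReal hmw.le]
      linarith
    linarith [hval, hsk_val]
  -- final assembly
  have hint_all : ∀ k ∈ S, Integrable (llr Qa Pi) (ENNReal.ofReal (w k) • Q k) := by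
    intro k hk
    rcases lt_or_ge 0 (w k) with hwk | hwk
    · exact ((hper k hk hwk).1).smul_measure ofReal_ne_top
    · rw [ENNReal.ofReal_eq_zero.2 hwk, zero_smul]
      exact integrable_zero_measure
  refine ⟨hQa_ac, ?_, ?_⟩
  · rw [hQa]
    exact integrable_finset_sum_measure.2 hint_all
  · have hsplit : ∫ θ, llr Qa Pi θ ∂Qa = ∑ k ∈ S, w k * ∫ θ, llr Qa Pi θ ∂(Q k) := by
      rw [hQa, integral_finset_sum_measure hint_all]
      refine Finset.sum_congr rfl fun k hk => ?_
      rw [integral_smul_measure, toReal_ofReal (hw0 k hk), smul_eq_mul]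
    rw [hsplit]
    have hterm : ∀ k ∈ S, w k * ∫ θ, llr Qa Pi θ ∂(Q k)
        ≤ w k * (Real.log (m * w k) + ∫ θ, llr (Q k) (P k) θ ∂(Q k))
          + ((m:ℝ)⁻¹ * (∫⁻ θ, f θ ∂(P k)).toReal - w k) := by
      intro k hk
      rcases eq_or_lt_of_le (hw0 k hk) with h0 | hwk
      · rw [← h0]
        simp only [zero_mul, sub_zero, zero_add]
        positivity
      · have h1 := (hper k hk hwk).2
        have h2 := mul_le_mul_of_nonneg_left h1 hwk.le
        have h3 : w k * ((m * w k)⁻¹ * (∫⁻ θ, f θ ∂(P k)).toReal - 1)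
            = (m:ℝ)⁻¹ * (∫⁻ θ, f θ ∂(P k)).toReal - w k := by
          field_simp
        calc w k * ∫ θ, llr Qa Pi θ ∂(Q k)
            ≤ w k * (Real.log (m * w k) + (∫ θ, llr (Q k) (P k) θ ∂(Q k))
                + ((m * w k)⁻¹ * (∫⁻ θ, f θ ∂(P k)).toReal - 1)) := h2
          _ = w k * (Real.log (m * w k) + ∫ θ, llr (Q k) (P k) θ ∂(Q k))
                + ((m:ℝ)⁻¹ * (∫⁻ θ, f θ ∂(P k)).toReal - w k) := by
              rw [mul_add, h3]
    refine le_trans (Finset.sum_le_sum hterm) ?_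
    rw [Finset.sum_add_distrib]
    have hzero : ∑ k ∈ S, ((m:ℝ)⁻¹ * (∫⁻ θ, f θ ∂(P k)).toReal - w k) = 0 := by
      rw [Finset.sum_sub_distrib, ← Finset.mul_sum, hwsum, ← ENNReal.toReal_sum hJne, hJsum,
        ENNReal.toReal_natCast, inv_mul_cancel₀ hmR.ne']
      ring
    rw [hzero, add_zero]

end MyHelpers

noncomputable section

/-- **Aggregation bound for the variational free energy** (Lemma 4). Pointwise in the
sample, the free energy of the exponentially weighted aggregate `Q̂ₙ,≤ₘ` relative to the
uniform mixture prior `Πₙ,≤ₘ` is at most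
`log m + inf over simplex weights ω̃ of Σₖ ω̃ₖ log(ω̃ₖ / exp(-mVFEₙ(k)))`, which is itself
at most `log m + minₖ mVFEₙ(k)`. -/
theorem composite_elbo_max
    {Θ : Type*} [MeasurableSpace Θ]
    (Mn m : ℕ) (hm1 : 1 ≤ m) (hmM : m ≤ Mn)
    (lam : ℝ) (hlam : 0 < lam)
    (loss : Θ → ℝ) (hloss : ∀ θ, 0 ≤ loss θ)
    (Prior : ℕ → Measure Θ) (hPrior : ∀ k, IsProbabilityMeasure (Prior k))
    (Qfam : ℕ → Set (Measure Θ)) (hQfam : ∀ k, ∀ Q ∈ Qfam k, IsProbabilityMeasure Q)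
    (Qhat : ℕ → Measure Θ)
    (hQhat : ∀ k, Qhat k ∈ Qfam k ∧ ∀ Q ∈ Qfam k,
      VFE lam loss (Prior k) (Qhat k) ≤ VFE lam loss (Prior k) Q)
    (mVFE : ℕ → ℝ≥0∞) (hmVFE : ∀ k, mVFE k = VFE lam loss (Prior k) (Qhat k)) :
    ((VFE lam loss ((m : ℝ≥0∞)⁻¹ • ∑ k ∈ Finset.Icc 1 m, Prior k)
        (∑ k ∈ Finset.Icc 1 m,
          ENNReal.ofReal (expNeg (mVFE k) / ∑ j ∈ Finset.Icc 1 m, expNeg (mVFE j)) •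
            Qhat k) : ℝ≥0∞) : EReal)
      ≤ (Real.log m : ℝ) +
        ⨅ (v : ℕ → ℝ) (_ : (∀ k ∈ Finset.Icc 1 m, 0 ≤ v k) ∧
            ∑ k ∈ Finset.Icc 1 m, v k = 1),
          ∑ k ∈ Finset.Icc 1 m,
            ((v k : ℝ) : EReal) * (((Real.log (v k) : ℝ) : EReal) + (mVFE k : EReal))
    ∧ ((Real.log m : ℝ) : EReal) +
        (⨅ (v : ℕ → ℝ) (_ : (∀ k ∈ Finset.Icc 1 m, 0 ≤ v k) ∧
            ∑ k ∈ Finset.Icc 1 m, v k = 1),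
          ∑ k ∈ Finset.Icc 1 m,
            ((v k : ℝ) : EReal) * (((Real.log (v k) : ℝ) : EReal) + (mVFE k : EReal)))
      ≤ ((Real.log m : ℝ) : EReal) + ⨅ k ∈ Finset.Icc 1 m, (mVFE k : EReal) := by
  classical
  have hm : 0 < m := hm1
  have hmR : (0:ℝ) < m := by exact_mod_cast hm
  have hcard : (Finset.Icc 1 m).card ≤ m := by rw [Nat.card_Icc]; omega
  have hQprob : ∀ k, IsProbabilityMeasure (Qhat k) := fun k => hQfam k _ (hQhat k).1
  set S := Finset.Icc 1 m with hSdef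
  set Z := ∑ j ∈ S, expNeg (mVFE j) with hZdef
  set Pi : Measure Θ := (m : ℝ≥0∞)⁻¹ • ∑ k ∈ S, Prior k with hPidef
  set Qagg : Measure Θ := ∑ k ∈ S, ENNReal.ofReal (expNeg (mVFE k) / Z) • Qhat k
    with hQaggdef
  constructor
  · -- ===================== part 1 =====================
    by_cases hZpos : 0 < Z
    · -- main case : some model has finite free energy
      set w : ℕ → ℝ := fun k => expNeg (mVFE k) / Z with hwdef
      have hw0 : ∀ k ∈ S, 0 ≤ w k := fun k _ => div_nonneg (expNeg_nonneg _) hZpos.le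
      have hwsum : ∑ k ∈ S, w k = 1 := by
        rw [hwdef]
        simp only
        rw [← Finset.sum_div, ← hZdef, div_self hZpos.ne']
      have hwpos : ∀ k, mVFE k ≠ ⊤ → 0 < w k := fun k h => div_pos (expNeg_pos h) hZpos
      have hwzero : ∀ k, mVFE k = ⊤ → w k = 0 := by
        intro k h
        rw [hwdef]
        simp [expNeg, h]
      have hne_of_pos : ∀ k, 0 < w k → mVFE k ≠ ⊤ :=
        fun k hwk ht => absurd (hwzero k ht) (by intro h0; rw [h0] at hwk; exact lt_irrefl 0 hwk)
      have hVFEk : ∀ k, mVFE k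
          = ENNReal.ofReal lam * (∫⁻ θ, ENNReal.ofReal (loss θ) ∂(Qhat k))
            + KL (Qhat k) (Prior k) := fun k => hmVFE k
      have hKLdata : ∀ k, mVFE k ≠ ⊤ →
          Qhat k ≪ Prior k ∧ Integrable (llr (Qhat k) (Prior k)) (Qhat k) ∧
          KL (Qhat k) (Prior k)
            = ENNReal.ofReal (∫ θ, llr (Qhat k) (Prior k) θ ∂(Qhat k)) ∧
          ENNReal.ofReal lam * (∫⁻ θ, ENNReal.ofReal (loss θ) ∂(Qhat k)) ≠ ⊤ := by
        intro k hk
        rw [hVFEk k, ENNReal.add_ne_top] at hk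
        have hKLne := hk.2
        have hKLif : KL (Qhat k) (Prior k)
            = if Qhat k ≪ Prior k ∧ Integrable (llr (Qhat k) (Prior k)) (Qhat k)
              then ENNReal.ofReal (∫ θ, llr (Qhat k) (Prior k) θ ∂(Qhat k)) else ⊤ := rfl
        by_cases hc : Qhat k ≪ Prior k ∧ Integrable (llr (Qhat k) (Prior k)) (Qhat k)
        · exact ⟨hc.1, hc.2, by rw [hKLif, if_pos hc], hk.1⟩
        · rw [hKLif, if_neg hc] at hKLne
          exact absurd rfl hKLne
      -- apply the core aggregation lemma
      obtain ⟨hac_agg, hint_agg, hineq⟩ :=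
        my_core S m hm hcard Prior Qhat hPrior hQprob w hw0 hwsum
          (fun k _ hwk => (hKLdata k (hne_of_pos k hwk)).1)
          (fun k _ hwk => (hKLdata k (hne_of_pos k hwk)).2.1)
      have hQagg_eq : Qagg = ∑ k ∈ S, ENNReal.ofReal (w k) • Qhat k := rfl
      rw [hQagg_eq]
      -- abbreviations
      set L : ℕ → ℝ≥0∞ := fun k => ∫⁻ θ, ENNReal.ofReal (loss θ) ∂(Qhat k) with hLdef
      set b : ℕ → ℝ := fun k => ∫ θ, llr (Qhat k) (Prior k) θ ∂(Qhat k) with hbdef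
      set a : ℕ → ℝ := fun k => (ENNReal.ofReal lam * L k).toReal with hadef
      set Qagg' : Measure Θ := ∑ k ∈ S, ENNReal.ofReal (w k) • Qhat k with hQagg'def
      -- the KL of the aggregate
      have hKLaggif : KL Qagg' Pi
          = if Qagg' ≪ Pi ∧ Integrable (llr Qagg' Pi) Qagg'
            then ENNReal.ofReal (∫ θ, llr Qagg' Pi θ ∂Qagg') else ⊤ := rfl
      have hKLagg : KL Qagg' Pi = ENNReal.ofReal (∫ θ, llr Qagg' Pi θ ∂Qagg') := by
        rw [hKLaggif, if_pos ⟨hac_agg, hint_agg⟩]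
      -- the loss part
      have hLagg : ∫⁻ θ, ENNReal.ofReal (loss θ) ∂Qagg' = ∑ k ∈ S, ENNReal.ofReal (w k) * L k := by
        rw [hQagg'def, lintegral_finset_sum_measure]
        exact Finset.sum_congr rfl fun k _ => lintegral_smul_measure _ _
      have hx : ENNReal.ofReal lam * ∫⁻ θ, ENNReal.ofReal (loss θ) ∂Qagg'
          = ENNReal.ofReal (∑ k ∈ S, w k * a k) := by
        rw [hLagg, Finset.mul_sum,
          ENNReal.ofReal_sum_of_nonneg (fun k hk => mul_nonneg (hw0 k hk) toReal_nonneg)]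
        refine Finset.sum_congr rfl fun k hk => ?_
        rcases eq_or_lt_of_le (hw0 k hk) with h0 | hwk
        · rw [← h0]
          simp
        · have hfin := (hKLdata k (hne_of_pos k hwk)).2.2.2
          rw [mul_left_comm, ENNReal.ofReal_mul (hw0 k hk)]
          congr 1
          exact (ofReal_toReal hfin).symm
      -- comparison of log-sums
      have hy_le : ∑ k ∈ S, w k * (Real.log (m * w k) + b k)
          ≤ ∑ k ∈ S, w k * (Real.log (m * w k) + max (b k) 0) := by
        refine Finset.sum_le_sum fun k hk => ?_
        exact mul_le_mul_of_nonneg_left (add_le_add_right (le_max_left _ _) _) (hw0 k hk)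
      have hy0 : 0 ≤ ∑ k ∈ S, w k * (Real.log (m * w k) + max (b k) 0) := by
        have h1 := my_entropy S m hcard hm w hw0 hwsum
        have h2 : (0:ℝ) ≤ ∑ k ∈ S, w k * max (b k) 0 :=
          Finset.sum_nonneg fun k hk => mul_nonneg (hw0 k hk) (le_max_right _ _)
        have h3 : ∑ k ∈ S, w k * (Real.log (m * w k) + max (b k) 0)
            = (∑ k ∈ S, w k * Real.log (m * w k)) + ∑ k ∈ S, w k * max (b k) 0 := by
          rw [← Finset.sum_add_distrib]
          exact Finset.sum_congr rfl fun k _ => by ring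
        rw [h3]
        linarith
      have hx0 : 0 ≤ ∑ k ∈ S, w k * a k :=
        Finset.sum_nonneg fun k hk => mul_nonneg (hw0 k hk) toReal_nonneg
      -- exact identity x + y' = log m - log Z
      have hxy : (∑ k ∈ S, w k * a k) + ∑ k ∈ S, w k * (Real.log (m * w k) + max (b k) 0)
          = Real.log m - Real.log Z := by
        rw [← Finset.sum_add_distrib]
        have hterm : ∀ k ∈ S, w k * a k + w k * (Real.log (m * w k) + max (b k) 0)
            = w k * (Real.log m - Real.log Z) := by
          intro k hk
          by_cases hne : mVFE k = ⊤
          · rw [hwzero k hne]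
            ring
          · have hwk : 0 < w k := hwpos k hne
            have hdata := hKLdata k hne
            have htk : (mVFE k).toReal = a k + max (b k) 0 := by
              rw [hVFEk k, hdata.2.2.1, toReal_add hdata.2.2.2 ofReal_ne_top,
                ENNReal.toReal_ofReal']
            have hlogw : Real.log (w k) = -(mVFE k).toReal - Real.log Z := by
              rw [hwdef]
              simp only
              rw [expNeg, if_neg hne, Real.log_div (Real.exp_ne_zero _) hZpos.ne',
                Real.log_exp]
            have hlogmw : Real.log ((m:ℝ) * w k) = Real.log m + Real.log (w k) :=
              Real.log_mul hmR.ne' hwk.ne'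
            rw [hlogmw, hlogw, htk]
            ring
        rw [Finset.sum_congr rfl hterm, ← Finset.sum_mul, hwsum, one_mul]
      -- the ℝ≥0∞-valued bound
      have hfinal : VFE lam loss Pi Qagg' ≤ ENNReal.ofReal (Real.log m - Real.log Z) := by
        have hVFEdef : VFE lam loss Pi Qagg'
            = ENNReal.ofReal lam * ∫⁻ θ, ENNReal.ofReal (loss θ) ∂Qagg' + KL Qagg' Pi := rfl
        rw [hVFEdef, hKLagg, hx]
        calc ENNReal.ofReal (∑ k ∈ S, w k * a k)
              + ENNReal.ofReal (∫ θ, llr Qagg' Pi θ ∂Qagg')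
            ≤ ENNReal.ofReal (∑ k ∈ S, w k * a k)
              + ENNReal.ofReal (∑ k ∈ S, w k * (Real.log (m * w k) + max (b k) 0)) := by
              exact add_le_add_right (ENNReal.ofReal_le_ofReal (hineq.trans hy_le)) _
          _ = ENNReal.ofReal ((∑ k ∈ S, w k * a k)
              + ∑ k ∈ S, w k * (Real.log (m * w k) + max (b k) 0)) :=
              (ENNReal.ofReal_add hx0 hy0).symm
          _ = ENNReal.ofReal (Real.log m - Real.log Z) := by rw [hxy]
      -- move to EReal
      have hZlem : Z ≤ (m:ℝ) := by
        rw [hZdef]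
        calc ∑ j ∈ S, expNeg (mVFE j) ≤ ∑ _j ∈ S, (1:ℝ) :=
              Finset.sum_le_sum fun j _ => expNeg_le_one _
          _ = S.card := by rw [Finset.sum_const, nsmul_eq_mul, mul_one]
          _ ≤ (m:ℝ) := by exact_mod_cast hcard
      have hdiff0 : 0 ≤ Real.log m - Real.log Z :=
        sub_nonneg.2 (Real.log_le_log hZpos hZlem)
      calc ((VFE lam loss Pi Qagg' : ℝ≥0∞) : EReal)
          ≤ ((ENNReal.ofReal (Real.log m - Real.log Z) : ℝ≥0∞) : EReal) :=
            EReal.coe_ennreal_le_coe_ennreal_iff.2 hfinal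
        _ = (((Real.log m - Real.log Z : ℝ)) : EReal) := by
            rw [EReal.coe_ennreal_ofReal, max_eq_left hdiff0]
        _ = ((Real.log m : ℝ) : EReal) + ((-(Real.log Z) : ℝ) : EReal) := by
            rw [← EReal.coe_add]
            norm_num
            rfl
        _ ≤ ((Real.log m : ℝ) : EReal) + _ := by
            refine add_le_add_right (le_iInf fun v => le_iInf fun hv => ?_) _
            exact my_G_lower S mVFE v hv.1 hv.2
    · -- degenerate case : Z = 0, all free energies are infinite
      have hZ0 : Z = 0 := le_antisymm (not_lt.1 hZpos)
        (Finset.sum_nonneg fun j _ => expNeg_nonneg _)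
      have halltop : ∀ k ∈ S, mVFE k = ⊤ := by
        intro k hk
        refine expNeg_eq_zero ?_
        have h1 := (Finset.sum_eq_zero_iff_of_nonneg
          (fun j _ => expNeg_nonneg (mVFE j))).1 (hZ0 ▸ hZdef.symm) k hk
        exact h1
      have hQagg0 : Qagg = 0 := by
        rw [hQaggdef]
        refine Finset.sum_eq_zero fun k hk => ?_
        rw [hZ0, _root_.div_zero, ofReal_zero, zero_smul]
      have hVFE0 : VFE lam loss Pi Qagg = 0 := by
        rw [hQagg0]
        have h0ac : (0 : Measure Θ) ≪ Pi := Measure.AbsolutelyContinuous.mk fun s _ _ => rfl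
        have hKL0 : KL (0 : Measure Θ) Pi = 0 := by
          have hif : KL (0 : Measure Θ) Pi
              = if (0 : Measure Θ) ≪ Pi ∧ Integrable (llr 0 Pi) (0 : Measure Θ)
                then ENNReal.ofReal (∫ θ, llr 0 Pi θ ∂(0 : Measure Θ)) else ⊤ := rfl
          rw [hif, if_pos ⟨h0ac, integrable_zero_measure⟩, integral_zero_measure, ofReal_zero]
        have hVdef : VFE lam loss Pi (0 : Measure Θ)
            = ENNReal.ofReal lam * ∫⁻ θ, ENNReal.ofReal (loss θ) ∂(0 : Measure Θ)
              + KL (0 : Measure Θ) Pi := rfl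
        rw [hVdef, hKL0, lintegral_zero_measure, mul_zero, zero_add]
      have hiinf : (⨅ (v : ℕ → ℝ) (_ : (∀ k ∈ S, 0 ≤ v k) ∧ ∑ k ∈ S, v k = 1),
          ∑ k ∈ S, ((v k : ℝ) : EReal) * (((Real.log (v k) : ℝ) : EReal) + (mVFE k : EReal)))
          = (⊤ : EReal) := by
        rw [iInf_eq_top]
        intro v
        rw [iInf_eq_top]
        intro hv
        obtain ⟨k, hk, hvk⟩ : ∃ k ∈ S, 0 < v k := by
          by_contra h
          push_neg at h
          have h1 : ∑ k ∈ S, v k = 0 :=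
            Finset.sum_eq_zero fun k hk => le_antisymm (h k hk) (hv.1 k hk)
          rw [hv.2] at h1
          norm_num at h1
        refine my_ereal_sum_eq_top S _ ?_ ⟨k, hk, ?_⟩
        · intro j hj
          rw [halltop j hj, EReal.coe_ennreal_top,
            EReal.add_top_of_ne_bot (EReal.coe_ne_bot _)]
          rcases eq_or_lt_of_le (hv.1 j hj) with h0 | h0
          · rw [← h0]
            simp
          · rw [EReal.coe_mul_top_of_pos h0]
            exact top_ne_bot
        · rw [halltop k hk, EReal.coe_ennreal_top,
            EReal.add_top_of_ne_bot (EReal.coe_ne_bot _), EReal.coe_mul_top_of_pos hvk]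
      rw [hVFE0, hiinf, EReal.coe_add_top]
      exact le_top
  · -- ===================== part 2 =====================
    refine add_le_add_right ?_ _
    refine le_iInf fun k => le_iInf fun hk => ?_
    have h1 : ∀ j ∈ S, 0 ≤ (fun j => if j = k then (1:ℝ) else 0) j := by
      intro j _
      dsimp only
      split <;> norm_num
    have h2 : ∑ j ∈ S, (fun j => if j = k then (1:ℝ) else 0) j = 1 := by
      simp only
      rw [Finset.sum_ite_eq' S k (fun _ => (1:ℝ))]
      rw [if_pos hk]
    refine iInf_le_of_le (fun j => if j = k then (1:ℝ) else 0)
      (iInf_le_of_le ⟨h1, h2⟩ (le_of_eq ?_))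
    rw [Finset.sum_eq_single_of_mem k hk]
    · simp [Real.log_one]
    · intro j _ hne
      simp [if_neg hne]
end
end

section
/- Let Q and Π be probability measures on a measurable space Θ. Then for any measurable subset B ⊆ Θ and any constant a > 0, Q(B) ≤ (1/a) · ( KL(Q, Π) + e^a · Π(B) ). -/
open MeasureTheory Filter Set ENNReal NNReal

noncomputable section
namespace KLaux

/-- Young-type inequality: `a * t ≤ t * log t - t + exp a` for `t ≥ 0`. -/
lemma young {t a : ℝ} (ht : 0 ≤ t) : a * t ≤ t * Real.log t - t + Real.exp a := by
  rcases eq_or_lt_of_le ht with h | h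
  · simp [← h, (Real.exp_pos a).le]
  · have h1 : (a - Real.log t) + 1 ≤ Real.exp (a - Real.log t) := Real.add_one_le_exp _
    have h2 : Real.exp (a - Real.log t) = Real.exp a / t := by
      rw [Real.exp_sub, Real.exp_log h]
    have h3 : t * ((a - Real.log t) + 1) ≤ t * (Real.exp a / t) :=
      mul_le_mul_of_nonneg_left (h2 ▸ h1) ht
    rw [mul_div_cancel₀ _ (ne_of_gt h)] at h3
    nlinarith

lemma sub_one_le_mul_log {t : ℝ} (ht : 0 ≤ t) : t - 1 ≤ t * Real.log t := by
  rcases eq_or_lt_of_le ht with h | h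
  · simp [← h]
  · have := Real.one_sub_inv_le_log_of_pos h
    have h3 : t * (1 - t⁻¹) ≤ t * Real.log t := mul_le_mul_of_nonneg_left this ht
    rw [mul_sub, mul_inv_cancel₀ (ne_of_gt h), mul_one] at h3
    linarith

end KLaux
end

noncomputable section
open KLaux

theorem kl_prob_bound'
    {Θ : Type*} [MeasurableSpace Θ]
    (Q Pi : Measure Θ) [IsProbabilityMeasure Q] [IsProbabilityMeasure Pi]
    (B : Set Θ) (hB : MeasurableSet B) (a : ℝ) (ha : 0 < a)
    (hac : Q ≪ Pi) (hint : Integrable (llr Q Pi) Q) :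
    (Q B).toReal ≤ a⁻¹ * ((∫ θ, llr Q Pi θ ∂Q) + Real.exp a * (Pi B).toReal) := by
  set g : Θ → ℝ := fun θ => (Q.rnDeriv Pi θ).toReal with hg
  have hgnn : ∀ θ, 0 ≤ g θ := fun θ => ENNReal.toReal_nonneg
  have hgmeas : Measurable g := (Measure.measurable_rnDeriv Q Pi).ennreal_toReal
  -- pointwise inequality
  have hpt : ∀ θ, a * (g θ * B.indicator (fun _ => (1:ℝ)) θ) ≤
      g θ * llr Q Pi θ - (g θ - 1) + (Real.exp a - 1) * B.indicator (fun _ => (1:ℝ)) θ := by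
    intro θ
    by_cases hθ : θ ∈ B
    · simp only [Set.indicator_of_mem hθ, mul_one]
      have := young (a := a) (hgnn θ)
      simp only [llr]
      linarith
    · simp only [Set.indicator_of_notMem hθ, mul_zero, mul_one, zero_mul, add_zero]
      have := sub_one_le_mul_log (hgnn θ)
      simp only [llr]
      linarith
  -- integrability facts
  have hind : Integrable (B.indicator (fun _ => (1:ℝ))) Pi :=
    (integrable_const (1:ℝ)).indicator hB
  have hgind : Integrable (fun θ => g θ * B.indicator (fun _ => (1:ℝ)) θ) Pi := by
    have := (integrable_rnDeriv_smul_iff (f := B.indicator (fun _ => (1:ℝ))) hac).mpr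
      ((integrable_const (1:ℝ)).indicator hB)
    simpa [smul_eq_mul] using this
  have hgllr : Integrable (fun θ => g θ * llr Q Pi θ) Pi := by
    have := (integrable_rnDeriv_smul_iff (f := llr Q Pi) hac).mpr hint
    simpa [smul_eq_mul] using this
  have hgint : Integrable g Pi := Measure.integrable_toReal_rnDeriv
  have hsub : Integrable (fun θ => g θ * llr Q Pi θ - (g θ - 1)) Pi := by
    exact hgllr.sub (hgint.sub (integrable_const 1))
  have hind' : Integrable (fun θ => (Real.exp a - 1) * B.indicator (fun _ => (1:ℝ)) θ) Pi :=
    hind.const_mul _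
  -- integrate the pointwise inequality
  have hInt : ∫ θ, a * (g θ * B.indicator (fun _ => (1:ℝ)) θ) ∂Pi ≤
      ∫ θ, (g θ * llr Q Pi θ - (g θ - 1) + (Real.exp a - 1) * B.indicator (fun _ => (1:ℝ)) θ) ∂Pi := by
    refine integral_mono (hgind.const_mul a) (hsub.add hind') hpt
  -- compute each integral
  have e1 : ∫ θ, g θ * B.indicator (fun _ => (1:ℝ)) θ ∂Pi = (Q B).toReal := by
    have := integral_rnDeriv_smul (f := B.indicator (fun _ => (1:ℝ))) hac
    simp only [smul_eq_mul] at this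
    rw [this]; simpa [measureReal_def, _root_.Pi.one_def] using integral_indicator_one hB
  have e2 : ∫ θ, g θ * llr Q Pi θ ∂Pi = ∫ θ, llr Q Pi θ ∂Q := by
    have := integral_rnDeriv_smul (f := llr Q Pi) hac
    simpa [smul_eq_mul] using this
  have e3 : ∫ θ, g θ ∂Pi = 1 := by
    rw [Measure.integral_toReal_rnDeriv hac]; simp
  have e4 : ∫ θ, B.indicator (fun _ => (1:ℝ)) θ ∂Pi = (Pi B).toReal := by
    simpa [measureReal_def, _root_.Pi.one_def] using (integral_indicator_one hB : ∫ x, B.indicator 1 x ∂Pi = (Pi B).toReal)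
  have hgsub : Integrable (fun θ => g θ - 1) Pi := by exact hgint.sub (integrable_const 1)
  rw [integral_const_mul, e1, integral_add hsub hind',
    integral_sub hgllr hgsub, integral_sub hgint (integrable_const 1),
    integral_const_mul, e2, e3, e4] at hInt
  simp only [integral_const, probReal_univ, ENNReal.toReal_one, one_smul, sub_self, sub_zero] at hInt
  have hPiB : (0:ℝ) ≤ (Pi B).toReal := ENNReal.toReal_nonneg
  rw [le_inv_mul_iff₀ ha]
  nlinarith [Real.exp_pos a]
end

noncomputable section

/-- **Probability bound via the Kullback–Leibler divergence** (Lemma 1, Eq. (kl_ineq_prob)).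
For probability measures `Q, Π` on a measurable space, any measurable set `B` and any
`a > 0`, `Q(B) ≤ a⁻¹ (KL(Q, Π) + eᵃ Π(B))`. -/
theorem kl_prob_bound
    {Θ : Type*} [MeasurableSpace Θ]
    (Q Pi : Measure Θ) [IsProbabilityMeasure Q] [IsProbabilityMeasure Pi]
    (B : Set Θ) (hB : MeasurableSet B) (a : ℝ) (ha : 0 < a) :
    Q B ≤ ENNReal.ofReal a⁻¹ * (KL Q Pi + ENNReal.ofReal (Real.exp a) * Pi B) := by
  by_cases hKL : Q ≪ Pi ∧ Integrable (llr Q Pi) Q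
  · obtain ⟨hac, hint⟩ := hKL
    have hreal := kl_prob_bound' Q Pi B hB a ha hac hint
    rw [KL, if_pos ⟨hac, hint⟩]
    calc Q B = ENNReal.ofReal (Q B).toReal := (ENNReal.ofReal_toReal (measure_ne_top _ _)).symm
      _ ≤ ENNReal.ofReal (a⁻¹ * ((∫ θ, llr Q Pi θ ∂Q) + Real.exp a * (Pi B).toReal)) :=
          ENNReal.ofReal_le_ofReal hreal
      _ = ENNReal.ofReal a⁻¹ *
            ENNReal.ofReal ((∫ θ, llr Q Pi θ ∂Q) + Real.exp a * (Pi B).toReal) :=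
          ENNReal.ofReal_mul (by positivity)
      _ ≤ ENNReal.ofReal a⁻¹ * (ENNReal.ofReal (∫ θ, llr Q Pi θ ∂Q) +
            ENNReal.ofReal (Real.exp a * (Pi B).toReal)) :=
          mul_le_mul_right ENNReal.ofReal_add_le _
      _ = ENNReal.ofReal a⁻¹ * (ENNReal.ofReal (∫ θ, llr Q Pi θ ∂Q) +
            ENNReal.ofReal (Real.exp a) * Pi B) := by
          rw [ENNReal.ofReal_mul (Real.exp_pos a).le,
            ENNReal.ofReal_toReal (measure_ne_top _ _)]
  · rw [KL, if_neg hKL, top_add, ENNReal.mul_top]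
    · exact le_top
    · simp [ENNReal.ofReal_eq_zero, not_le, inv_pos, ha]
end
end
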